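/- arXiv:1203.3749 — 4 statements merged into one kernel-verified Lean document; each statement's English description precedes it below -/
import Mathlib

section
/- Let π be a partition of {1,…,k} with q := #π ≤ k blocks. Then every π-consistent graph has at most k−q+1 connected components. -/
open Finset

section Defs

open scoped Classical

variable {k : ℕ}

/-- Two elements lie in the same block of the partition. -/
def InSameBlock (P : Finpartition (Finset.univ : Finset (Fin k))) (x y : Fin k) : Prop :=
  ∃ B ∈ P.parts, x ∈ B ∧ y ∈ B

/-- A partition of `{1,…,k}` is crossing if there are `a < b < c < d` with `a ∼ c`, `b ∼ d`
but `a` and `c` not in the same block as `b` and `d`. -/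
def IsCrossing (P : Finpartition (Finset.univ : Finset (Fin k))) : Prop :=
  ∃ a b c d : Fin k, a < b ∧ b < c ∧ c < d ∧
    InSameBlock P a c ∧ InSameBlock P b d ∧ ¬ InSameBlock P a b

/-- The closed block `B̄ = B ∪ {l : l - 1 ∈ B}` (indices cyclic). -/
def closedBlock [NeZero k] (B : Finset (Fin k)) : Finset (Fin k) :=
  B ∪ B.image (· + 1)

/-- The multiplicity `m_π(l)`: `2` if `l ∼_π l-1`, and `1` otherwise. -/
noncomputable def multPi [NeZero k] (P : Finpartition (Finset.univ : Finset (Fin k)))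
    (l : Fin k) : ℕ :=
  if InSameBlock P l (l - 1) then 2 else 1

/-- Number of endpoints of the edge `e` equal to `v`, counted with multiplicity
(a loop at `v` counts twice). -/
def endCount (v : Fin k) (e : Sym2 (Fin k)) : ℕ :=
  Sym2.lift ⟨fun a b => (if a = v then 1 else 0) + (if b = v then 1 else 0),
    fun _ _ => add_comm _ _⟩ e

/-- Degree of the vertex `v` in the multiset of edges `M`. -/
def degIn (v : Fin k) (M : Multiset (Sym2 (Fin k))) : ℕ :=
  (M.map (endCount v)).sum

/-- The simple graph underlying the multigraph with edge multiset `M`. -/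
def graphOf (M : Multiset (Sym2 (Fin k))) : SimpleGraph (Fin k) where
  Adj v w := v ≠ w ∧ s(v, w) ∈ M
  symm := by
    constructor
    intro v w h
    exact ⟨Ne.symm h.1, by rw [Sym2.eq_swap]; exact h.2⟩
  loopless := ⟨fun v h => h.1 rfl⟩

/-- Number of connected components of the multigraph with edge multiset `M`
(isolated vertices and vertices carrying only loops count as components). -/
noncomputable def numComponents (M : Multiset (Sym2 (Fin k))) : ℕ :=
  Nat.card (graphOf M).ConnectedComponent

/-- `M` together with the decomposition `F` is a `π`-consistent multigraph:
`M` has `k` edges; `M` is the disjoint union of the `F B`, `B` a block of `π`;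
the ends of every edge of `F B` lie in the closed block `B̄`; and in the submultigraph
`(B̄, F B)` every vertex `l ∈ B̄` has degree `m_π(l)`. -/
def IsConsistentDecomp [NeZero k] (P : Finpartition (Finset.univ : Finset (Fin k)))
    (M : Multiset (Sym2 (Fin k))) (F : Finset (Fin k) → Multiset (Sym2 (Fin k))) : Prop :=
  Multiset.card M = k ∧
  M = ∑ B ∈ P.parts, F B ∧
  (∀ B ∈ P.parts, ∀ e ∈ F B, ∀ v ∈ e, v ∈ closedBlock B) ∧
  (∀ B ∈ P.parts, ∀ v ∈ closedBlock B, degIn v (F B) = multPi P v)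

/-- A `π`-consistent multigraph. -/
def Consistent [NeZero k] (P : Finpartition (Finset.univ : Finset (Fin k)))
    (M : Multiset (Sym2 (Fin k))) : Prop :=
  ∃ F, IsConsistentDecomp P M F

end Defs

section Aux

variable {k : ℕ}

lemma endCount_mk (v a b : Fin k) :
    endCount v s(a, b) = (if a = v then 1 else 0) + (if b = v then 1 else 0) := rfl

lemma endCount_pos {v : Fin k} {e : Sym2 (Fin k)} (h : v ∈ e) : 0 < endCount v e := by
  revert h
  induction e using Sym2.ind with
  | _ a b =>
    intro h
    rw [Sym2.mem_iff] at h
    rw [endCount_mk]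
    rcases h with rfl | rfl <;> simp

lemma endCount_eq_zero {v : Fin k} {e : Sym2 (Fin k)} (h : v ∉ e) : endCount v e = 0 := by
  revert h
  induction e using Sym2.ind with
  | _ a b =>
    intro h
    rw [Sym2.mem_iff] at h
    push_neg at h
    rw [endCount_mk, if_neg (Ne.symm h.1), if_neg (Ne.symm h.2)]

lemma exists_mem_of_degIn_pos {v : Fin k} {N : Multiset (Sym2 (Fin k))}
    (h : 0 < degIn v N) : ∃ e ∈ N, v ∈ e := by
  by_contra hc
  push_neg at hc
  have hz : degIn v N = 0 := by
    unfold degIn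
    refine Multiset.sum_eq_zero ?_
    intro x hx
    obtain ⟨e, he, rfl⟩ := Multiset.mem_map.mp hx
    exact endCount_eq_zero (hc e he)
  omega

lemma comp_eq_of_mem_edge {M : Multiset (Sym2 (Fin k))} {e : Sym2 (Fin k)} (heM : e ∈ M)
    {v w : Fin k} (hv : v ∈ e) (hw : w ∈ e) :
    (graphOf M).connectedComponentMk v = (graphOf M).connectedComponentMk w := by
  revert heM hv hw
  induction e using Sym2.ind with
  | _ a b =>
    intro heM hv hw
    rw [Sym2.mem_iff] at hv hw
    by_cases hab : a = b
    · subst hab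
      rcases hv with rfl | rfl <;> rcases hw with rfl | rfl <;> rfl
    · have hadj : (graphOf M).Adj a b := ⟨hab, heM⟩
      have hcomp := SimpleGraph.ConnectedComponent.connectedComponentMk_eq_of_adj hadj
      rcases hv with rfl | rfl <;> rcases hw with rfl | rfl
      · rfl
      · exact hcomp
      · exact hcomp.symm
      · rfl

lemma multiset_card_sum {ι α : Type*} (s : Finset ι) (f : ι → Multiset α) :
    Multiset.card (∑ i ∈ s, f i) = ∑ i ∈ s, Multiset.card (f i) := by
  induction s using Finset.cons_induction with
  | empty => simp
  | cons a t ha ih => simp [Finset.sum_cons, ih]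

lemma card_le_edgeFinset_card_add_one {V : Type*} [Fintype V] (G : SimpleGraph V)
    [Fintype G.edgeSet] (h : G.Connected) :
    Fintype.card V ≤ G.edgeFinset.card + 1 := by
  classical
  obtain ⟨r⟩ := h.nonempty
  have key : ∀ x : V, x ≠ r → ∃ y, G.Adj x y ∧ G.dist y r < G.dist x r := by
    intro x hx
    obtain ⟨p, hp⟩ := (h.preconnected x r).exists_walk_length_eq_dist
    obtain ⟨y, hadj, p', rfl⟩ := SimpleGraph.Walk.exists_eq_cons_of_ne hx p
    refine ⟨y, hadj, lt_of_le_of_lt (SimpleGraph.dist_le p') ?_⟩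
    rw [SimpleGraph.Walk.length_cons] at hp
    omega
  choose nb hnb1 hnb2 using key
  set f : V → Sym2 V := fun x => if hx : x = r then s(r, r) else s(x, nb x hx) with hf
  have hmap : ∀ x ∈ Finset.univ.erase r, f x ∈ G.edgeFinset := by
    intro x hx
    have hxr : x ≠ r := Finset.ne_of_mem_erase hx
    rw [hf]
    simp only [dif_neg hxr]
    rw [SimpleGraph.mem_edgeFinset, SimpleGraph.mem_edgeSet]
    exact hnb1 x hxr
  have hinj : Set.InjOn f (Finset.univ.erase r : Finset V) := by
    intro x hx y hy hxy
    have hxr : x ≠ r := Finset.ne_of_mem_erase (Finset.mem_coe.mp hx)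
    have hyr : y ≠ r := Finset.ne_of_mem_erase (Finset.mem_coe.mp hy)
    rw [hf] at hxy
    simp only [dif_neg hxr, dif_neg hyr] at hxy
    rw [Sym2.eq_iff] at hxy
    rcases hxy with ⟨h1, _⟩ | ⟨h1, h2⟩
    · exact h1
    · exfalso
      have d1 := hnb2 x hxr
      have d2 := hnb2 y hyr
      rw [h2] at d1
      rw [← h1] at d2
      omega
  have hcard := Finset.card_le_card_of_injOn f hmap hinj
  rw [Finset.card_erase_of_mem (Finset.mem_univ r), Finset.card_univ] at hcard
  have hpos : 0 < Fintype.card V := Fintype.card_pos_iff.mpr ⟨r⟩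
  omega

end Aux

/-- **Lemma (maximal number of components).**
Let `π` be a partition of `{1,…,k}` with `q = #π ≤ k` blocks. Then every `π`-consistent
multigraph has at most `k - q + 1` connected components. -/
theorem consistent_graph_components_le (k : ℕ) [NeZero k]
    (P : Finpartition (Finset.univ : Finset (Fin k)))
    (M : Multiset (Sym2 (Fin k))) (hM : Consistent P M) :
    numComponents M ≤ k - P.parts.card + 1 := by
  classical
  obtain ⟨m, rfl⟩ : ∃ m, k = m + 1 := Nat.exists_eq_succ_of_ne_zero (NeZero.ne k)
  obtain ⟨F, hcard, hsum, hends, hdeg⟩ := hM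
  have hFM : ∀ B ∈ P.parts, ∀ e ∈ F B, e ∈ M := by
    intro B hB e he
    rw [hsum]
    exact Multiset.mem_sum.mpr ⟨B, hB, he⟩
  have hbex : ∀ l : Fin (m + 1), ∃ B ∈ P.parts, l ∈ B := fun l => P.exists_mem (Finset.mem_univ l)
  choose blk hblkmem hblkin using hbex
  have hmult : ∀ l, 0 < multPi P l := by
    intro l
    unfold multPi
    split <;> omega
  have hedge : ∀ (l : Fin (m + 1)) (B : Finset (Fin (m + 1))), B ∈ P.parts → l ∈ closedBlock B →
      ∃ e ∈ F B, l ∈ e := by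
    intro l B hB hl
    apply exists_mem_of_degIn_pos
    rw [hdeg B hB l hl]
    exact hmult l
  have hmem1 : ∀ (B : Finset (Fin (m + 1))), ∀ l ∈ B, l ∈ closedBlock B := fun B l hl =>
    Finset.mem_union_left _ hl
  have hmem2 : ∀ (B : Finset (Fin (m + 1))) (l : Fin (m + 1)), l ∈ B → l + 1 ∈ closedBlock B :=
    fun B l hl => Finset.mem_union_right _ (Finset.mem_image.mpr ⟨l, hl, rfl⟩)
  haveI : Fintype (graphOf M).ConnectedComponent := Fintype.ofFinite _
  -- the auxiliary bipartite incidence graph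
  set Comp := (graphOf M).ConnectedComponent with hComp
  let X := ↥P.parts ⊕ Comp
  let touch : ↥P.parts → Comp → Prop := fun B C =>
    ∃ e ∈ F B.1, ∃ v ∈ e, (graphOf M).connectedComponentMk v = C
  let H : SimpleGraph X :=
    { Adj := fun x y => (∃ B C, touch B C ∧ x = Sum.inl B ∧ y = Sum.inr C) ∨
        (∃ B C, touch B C ∧ x = Sum.inr C ∧ y = Sum.inl B)
      symm := by
        constructor
        rintro x y (⟨B, C, h, rfl, rfl⟩ | ⟨B, C, h, rfl, rfl⟩)
        · exact Or.inr ⟨B, C, h, rfl, rfl⟩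
        · exact Or.inl ⟨B, C, h, rfl, rfl⟩
      loopless := by
        constructor
        rintro x (⟨B, C, h, rfl, h2⟩ | ⟨B, C, h, rfl, h2⟩) <;> simp at h2 }
  have hadj1 : ∀ l : Fin (m + 1),
      H.Adj (Sum.inl ⟨blk l, hblkmem l⟩) (Sum.inr ((graphOf M).connectedComponentMk l)) := by
    intro l
    obtain ⟨e, he, hle⟩ := hedge l (blk l) (hblkmem l) (hmem1 _ _ (hblkin l))
    exact Or.inl ⟨⟨blk l, hblkmem l⟩, _, ⟨e, he, l, hle, rfl⟩, rfl, rfl⟩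
  have hadj2 : ∀ l : Fin (m + 1),
      H.Adj (Sum.inl ⟨blk (l - 1), hblkmem (l - 1)⟩)
        (Sum.inr ((graphOf M).connectedComponentMk l)) := by
    intro l
    have hlin : l ∈ closedBlock (blk (l - 1)) := by
      have := hmem2 (blk (l - 1)) (l - 1) (hblkin (l - 1))
      rwa [sub_add_cancel] at this
    obtain ⟨e, he, hle⟩ := hedge l (blk (l - 1)) (hblkmem (l - 1)) hlin
    exact Or.inl ⟨⟨blk (l - 1), hblkmem (l - 1)⟩, _, ⟨e, he, l, hle, rfl⟩, rfl, rfl⟩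
  have reach3 : ∀ l : Fin (m + 1),
      H.Reachable (Sum.inl ⟨blk 0, hblkmem 0⟩) (Sum.inl ⟨blk l, hblkmem l⟩) := by
    have main : ∀ (n : ℕ) (l : Fin (m + 1)), l.val = n →
        H.Reachable (Sum.inl ⟨blk 0, hblkmem 0⟩) (Sum.inl ⟨blk l, hblkmem l⟩) := by
      intro n
      induction n with
      | zero =>
        intro l hl
        have : l = 0 := Fin.ext (by simp [hl])
        subst this
        exact SimpleGraph.Reachable.refl _
      | succ n ih =>
        intro l hl
        have hl0 : l ≠ 0 := by
          intro h
          subst h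
          simp at hl
        have hval : (l - 1).val = n := by
          rw [Fin.coe_sub_one, if_neg hl0]
          omega
        have h1 := ih (l - 1) hval
        exact h1.trans ((hadj2 l).reachable.trans (hadj1 l).reachable.symm)
    exact fun l => main l.val l rfl
  have hreach : ∀ x : X, H.Reachable (Sum.inl ⟨blk 0, hblkmem 0⟩) x := by
    intro x
    match x with
    | Sum.inl B =>
      obtain ⟨l, hl⟩ := P.nonempty_of_mem_parts B.2
      have hEq : (⟨blk l, hblkmem l⟩ : ↥P.parts) = B :=
        Subtype.ext (P.eq_of_mem_parts (hblkmem l) B.2 (hblkin l) hl)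
      rw [← hEq]
      exact reach3 l
    | Sum.inr C =>
      obtain ⟨l, hl⟩ := Quot.exists_rep C
      have hl' : (graphOf M).connectedComponentMk l = C := hl
      rw [← hl']
      exact (reach3 l).trans (hadj1 l).reachable
  have hconn : H.Connected := by
    rw [SimpleGraph.connected_iff]
    exact ⟨fun x y => (hreach x).symm.trans (hreach y), ⟨Sum.inl ⟨blk 0, hblkmem 0⟩⟩⟩
  haveI : Fintype H.edgeSet := Fintype.ofFinite _
  -- bound the number of edges of `H`
  set T : ↥P.parts → Finset Comp := fun B => Finset.univ.filter (fun C => touch B C) with hT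
  have hsub : H.edgeFinset ⊆ Finset.univ.biUnion
      (fun B : ↥P.parts => (T B).image (fun C => s(Sum.inl B, Sum.inr C))) := by
    intro e he
    rw [SimpleGraph.mem_edgeFinset] at he
    revert he
    refine Sym2.ind ?_ e
    intro x y he
    rw [SimpleGraph.mem_edgeSet] at he
    have hmemBi : ∀ (B : ↥P.parts) (C : Comp), touch B C →
        s(Sum.inl B, (Sum.inr C : X)) ∈ Finset.univ.biUnion
          (fun B : ↥P.parts => (T B).image (fun C => s(Sum.inl B, Sum.inr C))) := by
      intro B C h
      refine Finset.mem_biUnion.mpr ⟨B, Finset.mem_univ _, Finset.mem_image.mpr ⟨C, ?_, rfl⟩⟩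
      rw [hT]
      exact Finset.mem_filter.mpr ⟨Finset.mem_univ _, h⟩
    rcases he with ⟨B, C, h, hx, hy⟩ | ⟨B, C, h, hx, hy⟩
    · rw [hx, hy]
      exact hmemBi B C h
    · rw [hx, hy, Sym2.eq_swap]
      exact hmemBi B C h
  have h3 : ∀ B : ↥P.parts, (T B).card ≤ Multiset.card (F B.1) := by
    intro B
    have hsubT : T B ⊆ (F B.1).toFinset.image
        (fun e => (graphOf M).connectedComponentMk e.out.1) := by
      intro C hC
      rw [hT, Finset.mem_filter] at hC
      obtain ⟨e, he, v, hv, hvC⟩ := hC.2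
      refine Finset.mem_image.mpr ⟨e, Multiset.mem_toFinset.mpr he, ?_⟩
      rw [← hvC]
      exact comp_eq_of_mem_edge (hFM B.1 B.2 e he) (Sym2.out_fst_mem e) hv
    calc (T B).card ≤ _ := Finset.card_le_card hsubT
      _ ≤ (F B.1).toFinset.card := Finset.card_image_le
      _ ≤ Multiset.card (F B.1) := Multiset.toFinset_card_le _
  have h4 : ∑ B : ↥P.parts, Multiset.card (F B.1) = m + 1 := by
    rw [Finset.univ_eq_attach, Finset.sum_attach P.parts (fun b => Multiset.card (F b))]
    rw [← multiset_card_sum, ← hsum, hcard]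
  have hedgecard : H.edgeFinset.card ≤ m + 1 := by
    calc H.edgeFinset.card ≤ _ := Finset.card_le_card hsub
      _ ≤ ∑ B : ↥P.parts, ((T B).image (fun C => s(Sum.inl B, (Sum.inr C : X)))).card :=
          Finset.card_biUnion_le
      _ ≤ ∑ B : ↥P.parts, (T B).card := Finset.sum_le_sum fun B _ => Finset.card_image_le
      _ ≤ ∑ B : ↥P.parts, Multiset.card (F B.1) := Finset.sum_le_sum fun B _ => h3 B
      _ = m + 1 := h4
  have hmain := card_le_edgeFinset_card_add_one H hconn
  have hcardX : Fintype.card X = P.parts.card + Fintype.card Comp := by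
    rw [Fintype.card_sum, Fintype.card_coe]
  have hq : P.parts.card ≤ m + 1 := by
    have := P.card_parts_le_card
    simpa using this
  have hnum : numComponents M = Fintype.card Comp := Nat.card_eq_fintype_card
  omega
end

section
/- Let {a(i): i∈ℕ} be a stationary process on a finite state space with E[a(1)]=0 satisfying the mixing estimate (3.2), and set t(i,i') := E[a(i)·a(i')]. Then there exists a constant C' (depending only on C, α and k) such that for every k∈ℕ and all i_1≤…≤i_{2k} in ℕ: E[a(i_1)·…·a(i_{2k})] = ∏_{l=1}^{k} t(i_{2l−1},i_{2l}) + R(i_1,…,i_{2k}), where |R(i_1,…,i_{2k})| ≤ C'·Σ_{l=1}^{k−1} α^{i_{2l+1}−i_{2l}}. -/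
open MeasureTheory ProbabilityTheory Finset

/-- The event that the process `a` takes the values `s t` at the times `i t` for all `t` in a
given set of positions. -/
def valueEvent {Ω : Type} [MeasureSpace Ω] {k : ℕ} (a : ℕ → Ω → ℝ) (i : Fin k → ℕ)
    (s : Fin k → ℝ) (pos : Finset (Fin k)) : Set Ω :=
  {ω | ∀ t ∈ pos, a (i t) ω = s t}

/-- The mixing estimate (3.2): for all `k`, every split point `l` with `0 < l`, all monotone
time tuples `i_1 ≤ … ≤ i_k` and all states, the conditional probability of the future values
given the past values differs from the unconditional probability by at most
`C·α^{i_l - i_{l-1}}`, whenever the conditioning event has positive probability. -/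
def MixingEstimate {Ω : Type} [MeasureSpace Ω] (a : ℕ → Ω → ℝ) (C α : ℝ) : Prop :=
  ∀ (k : ℕ) (i : Fin k → ℕ), Monotone i → ∀ (s : Fin k → ℝ) (l : Fin k), 0 < l.val →
    volume (valueEvent a i s (univ.filter (fun t => t < l))) ≠ 0 →
    |(volume (valueEvent a i s (univ.filter (fun t => l ≤ t)) ∩
          valueEvent a i s (univ.filter (fun t => t < l)))).toReal /
        (volume (valueEvent a i s (univ.filter (fun t => t < l)))).toReal -
      (volume (valueEvent a i s (univ.filter (fun t => l ≤ t)))).toReal|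
      ≤ C * α ^ (i l - i ⟨l.val - 1, by omega⟩)

section Aux

lemma prod_filter_lt_fin {n m : ℕ} (hm : m < n) (f : ℕ → ℝ) :
    ∏ t ∈ univ.filter (fun t : Fin n => t < (⟨m, hm⟩ : Fin n)), f t.val
      = ∏ r ∈ range m, f r := by
  refine Finset.prod_bij' (fun t _ => t.val) (fun r hr => ⟨r, by simp at hr; omega⟩) ?_ ?_ ?_ ?_ ?_
  · intro t htm; simp at htm ⊢; exact htm
  · intro r hr; simp at hr ⊢; exact hr
  · intro t _; rfl
  · intro r _; rfl
  · intro t _; rfl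

lemma expand_moment {W : Type*} [MeasurableSpace W] (μ : Measure W) [IsProbabilityMeasure μ]
    {n : ℕ} (c : Fin n → W → ℝ) (hc : ∀ t, Measurable (c t))
    (S : Finset ℝ) (hv : ∀ t ω, c t ω ∈ S) :
    ∫ ω, ∏ t, c t ω ∂μ =
      ∑ s ∈ Fintype.piFinset (fun _ : Fin n => S),
        (∏ t, s t) * (μ {ω | ∀ t, c t ω = s t}).toReal := by
  have hmeasE : ∀ s : Fin n → ℝ, MeasurableSet {ω | ∀ t, c t ω = s t} := by
    intro s
    have h : {ω | ∀ t, c t ω = s t} = ⋂ t, c t ⁻¹' {s t} := by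
      ext ω; simp [Set.mem_iInter]
    rw [h]
    exact MeasurableSet.iInter fun t => hc t (measurableSet_singleton _)
  have hpt : (fun ω => ∏ t, c t ω) =
      fun ω => ∑ s ∈ Fintype.piFinset (fun _ : Fin n => S),
        (∏ t, s t) * Set.indicator {ω | ∀ t, c t ω = s t} (fun _ => (1:ℝ)) ω := by
    funext ω
    rw [Finset.sum_eq_single (fun t => c t ω)]
    · have : ω ∈ {ω' | ∀ t, c t ω' = (fun t => c t ω) t} := fun t => rfl
      rw [Set.indicator_of_mem this]; ring
    · intro s hs hne
      have : ω ∉ {ω' | ∀ t, c t ω' = s t} := by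
        intro hmem
        exact hne (funext fun t => (hmem t).symm)
      rw [Set.indicator_of_notMem this]; ring
    · intro habs
      exact absurd (Fintype.mem_piFinset.2 fun t => hv t ω) habs
  rw [hpt, integral_finset_sum]
  · refine Finset.sum_congr rfl fun s _ => ?_
    rw [MeasureTheory.integral_const_mul, integral_indicator_const (1:ℝ) (hmeasE s)]
    simp [Measure.real]
  · intro s _
    exact (((integrable_const (1:ℝ)).indicator (hmeasE s)).const_mul _)

lemma cov_bound {Ω : Type} [MeasureSpace Ω] [IsProbabilityMeasure (volume : Measure Ω)]
    (S : Finset ℝ) (a : ℕ → Ω → ℝ) (hmeas : ∀ i, Measurable (a i))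
    (hvals : ∀ i ω, a i ω ∈ S)
    (C α : ℝ) (hC : 0 ≤ C) (hα0 : 0 ≤ α)
    (hmix : MixingEstimate a C α)
    (M : ℝ) (hM0 : 0 ≤ M) (hM : ∀ x ∈ S, |x| ≤ M)
    {n : ℕ} (i : Fin n → ℕ) (hi : Monotone i) (l : Fin n) (hl : 0 < l.val) :
    |(∫ ω, ∏ t, a (i t) ω) -
      (∫ ω, ∏ t ∈ univ.filter (fun t => t < l), a (i t) ω) *
      (∫ ω, ∏ t ∈ univ.filter (fun t => l ≤ t), a (i t) ω)|
      ≤ C * M ^ n * S.card ^ n * α ^ (i l - i ⟨l.val - 1, by omega⟩) := by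
  set μ : Measure Ω := volume with hμ
  set g : ℕ := i l - i ⟨l.val - 1, by omega⟩ with hg
  have hA : (∫ ω, ∏ t, a (i t) ω) =
      ∑ s ∈ Fintype.piFinset (fun _ : Fin n => S),
        (∏ t, s t) * (μ {ω | ∀ t, a (i t) ω = s t}).toReal :=
    expand_moment μ (fun t ω => a (i t) ω) (fun t => hmeas (i t)) S (fun t ω => hvals _ ω)
  set c : Fin n → Ω × Ω → ℝ := fun t p => if t < l then a (i t) p.1 else a (i t) p.2 with hc
  have hcm : ∀ t, Measurable (c t) := by
    intro t
    by_cases h : t < l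
    · simp only [hc, if_pos h]; exact (hmeas (i t)).comp measurable_fst
    · simp only [hc, if_neg h]; exact (hmeas (i t)).comp measurable_snd
  have hcv : ∀ t p, c t p ∈ S := by
    intro t p; by_cases h : t < l <;> simp [hc, h, hvals]
  have hB0 : ∫ p, ∏ t, c t p ∂(μ.prod μ) =
      ∑ s ∈ Fintype.piFinset (fun _ : Fin n => S),
        (∏ t, s t) * ((μ.prod μ) {p | ∀ t, c t p = s t}).toReal :=
    expand_moment (μ.prod μ) c hcm S hcv
  have hsplit : ∀ f : Fin n → ℝ, (∏ t ∈ univ.filter (fun t => t < l), f t) *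
      (∏ t ∈ univ.filter (fun t => l ≤ t), f t) = ∏ t, f t := by
    intro f
    have hfilt : univ.filter (fun t : Fin n => l ≤ t) = univ.filter (fun t => ¬ t < l) := by
      ext t; simp [not_lt]
    rw [hfilt, Finset.prod_filter_mul_prod_filter_not univ (fun t => t < l) f]
  have hBL : ∫ p, ∏ t, c t p ∂(μ.prod μ) =
      (∫ ω, ∏ t ∈ univ.filter (fun t => t < l), a (i t) ω) *
      (∫ ω, ∏ t ∈ univ.filter (fun t => l ≤ t), a (i t) ω) := by
    rw [← MeasureTheory.integral_prod_mul]
    apply integral_congr_ae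
    filter_upwards with p
    rw [← hsplit (fun t => c t p)]
    congr 1
    · refine Finset.prod_congr rfl (fun t ht => ?_)
      simp only [mem_filter, mem_univ, true_and] at ht
      simp only [hc]
      rw [if_pos ht]
    · refine Finset.prod_congr rfl (fun t ht => ?_)
      simp only [mem_filter, mem_univ, true_and] at ht
      simp only [hc]
      rw [if_neg (not_lt_of_ge ht)]
  have hev : ∀ s : Fin n → ℝ, {p : Ω × Ω | ∀ t, c t p = s t} =
      (valueEvent a i s (univ.filter (fun t => t < l))) ×ˢ
      (valueEvent a i s (univ.filter (fun t => l ≤ t))) := by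
    intro s
    ext p
    simp only [Set.mem_setOf_eq, Set.mem_prod, valueEvent, mem_filter, mem_univ, true_and]
    constructor
    · intro h
      refine ⟨fun t ht => ?_, fun t ht => ?_⟩
      · have h' := h t; simp only [hc] at h'; rwa [if_pos ht] at h'
      · have h' := h t; simp only [hc] at h'; rwa [if_neg (not_lt_of_ge ht)] at h'
    · rintro ⟨h1, h2⟩ t
      simp only [hc]
      by_cases ht : t < l
      · rw [if_pos ht]; exact h1 t ht
      · rw [if_neg ht]; exact h2 t (le_of_not_gt ht)
  have hfull : ∀ s : Fin n → ℝ, {ω | ∀ t, a (i t) ω = s t} =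
      valueEvent a i s (univ.filter (fun t => l ≤ t)) ∩
      valueEvent a i s (univ.filter (fun t => t < l)) := by
    intro s
    ext ω
    simp only [Set.mem_setOf_eq, Set.mem_inter_iff, valueEvent, mem_filter, mem_univ, true_and]
    constructor
    · intro h; exact ⟨fun t _ => h t, fun t _ => h t⟩
    · rintro ⟨h1, h2⟩ t
      rcases lt_or_ge t l with ht | ht
      · exact h2 t ht
      · exact h1 t ht
  have hterm : ∀ s ∈ Fintype.piFinset (fun _ : Fin n => S),
      |(μ {ω | ∀ t, a (i t) ω = s t}).toReal -
        ((μ.prod μ) {p | ∀ t, c t p = s t}).toReal| ≤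
      C * α ^ g * (μ (valueEvent a i s (univ.filter (fun t => t < l)))).toReal := by
    intro s _
    rw [hev s, Measure.prod_prod, ENNReal.toReal_mul, hfull s]
    set P := valueEvent a i s (univ.filter (fun t => t < l))
    set F := valueEvent a i s (univ.filter (fun t => l ≤ t))
    by_cases h0 : μ P = 0
    · have hsub : μ (F ∩ P) = 0 :=
        le_antisymm (le_trans (measure_mono Set.inter_subset_right) (le_of_eq h0)) zero_le
      simp [h0, hsub]
    · have hp : 0 < (μ P).toReal := ENNReal.toReal_pos h0 (measure_ne_top μ _)
      have hmx := hmix n i hi s l hl h0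
      have key : |(μ (F ∩ P)).toReal - (μ P).toReal * (μ F).toReal| =
          (μ P).toReal * |(μ (F ∩ P)).toReal / (μ P).toReal - (μ F).toReal| := by
        have heq : (μ (F ∩ P)).toReal - (μ P).toReal * (μ F).toReal =
            (μ P).toReal * ((μ (F ∩ P)).toReal / (μ P).toReal - (μ F).toReal) := by
          field_simp
        rw [heq, abs_mul, abs_of_pos hp]
      calc |(μ (F ∩ P)).toReal - (μ P).toReal * (μ F).toReal|
          = (μ P).toReal * |(μ (F ∩ P)).toReal / (μ P).toReal - (μ F).toReal| := key
        _ ≤ (μ P).toReal * (C * α ^ g) := by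
            exact mul_le_mul_of_nonneg_left hmx hp.le
        _ = C * α ^ g * (μ P).toReal := by ring
  rw [hA, hBL.symm, hB0, ← Finset.sum_sub_distrib]
  calc |∑ s ∈ Fintype.piFinset (fun _ : Fin n => S),
        ((∏ t, s t) * (μ {ω | ∀ t, a (i t) ω = s t}).toReal -
         (∏ t, s t) * ((μ.prod μ) {p | ∀ t, c t p = s t}).toReal)|
      ≤ ∑ s ∈ Fintype.piFinset (fun _ : Fin n => S),
        |(∏ t, s t) * (μ {ω | ∀ t, a (i t) ω = s t}).toReal -
         (∏ t, s t) * ((μ.prod μ) {p | ∀ t, c t p = s t}).toReal| :=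
        Finset.abs_sum_le_sum_abs _ _
    _ ≤ ∑ s ∈ Fintype.piFinset (fun _ : Fin n => S), M ^ n * (C * α ^ g) := by
        apply Finset.sum_le_sum
        intro s hs
        rw [← mul_sub, abs_mul]
        have h1 : |∏ t, s t| ≤ M ^ n := by
          rw [Finset.abs_prod]
          calc ∏ t, |s t| ≤ ∏ _t : Fin n, M := by
                apply Finset.prod_le_prod (fun _ _ => abs_nonneg _)
                intro t _
                exact hM (s t) (Fintype.mem_piFinset.1 hs t)
            _ = M ^ n := by simp
        have h2 := hterm s hs
        have hple : (μ (valueEvent a i s (univ.filter (fun t => t < l)))).toReal ≤ 1 := by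
          calc (μ (valueEvent a i s (univ.filter (fun t => t < l)))).toReal
              ≤ (1 : ENNReal).toReal := ENNReal.toReal_mono ENNReal.one_ne_top prob_le_one
            _ = 1 := by simp
        calc |∏ t, s t| * |(μ {ω | ∀ t, a (i t) ω = s t}).toReal -
              ((μ.prod μ) {p | ∀ t, c t p = s t}).toReal|
            ≤ M ^ n * (C * α ^ g * (μ (valueEvent a i s (univ.filter (fun t => t < l)))).toReal) := by
              apply mul_le_mul h1 h2 (abs_nonneg _) (pow_nonneg hM0 _)
          _ ≤ M ^ n * (C * α ^ g * 1) := by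
              apply mul_le_mul_of_nonneg_left _ (pow_nonneg hM0 _)
              apply mul_le_mul_of_nonneg_left hple
              positivity
          _ = M ^ n * (C * α ^ g) := by ring
    _ = (S.card ^ n : ℝ) * (M ^ n * (C * α ^ g)) := by
        rw [Finset.sum_const, nsmul_eq_mul]
        congr 1
        rw [Fintype.card_piFinset]
        simp
    _ = C * M ^ n * S.card ^ n * α ^ g := by ring

lemma aux_moment {Ω : Type} [MeasureSpace Ω] [IsProbabilityMeasure (volume : Measure Ω)]
    (S : Finset ℝ) (a : ℕ → Ω → ℝ) (hmeas : ∀ i, Measurable (a i))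
    (hvals : ∀ i ω, a i ω ∈ S)
    (C α : ℝ) (hC : 0 ≤ C) (hα0 : 0 ≤ α)
    (hmix : MixingEstimate a C α)
    (M : ℝ) (hM0 : 0 ≤ M) (hM : ∀ x ∈ S, |x| ≤ M)
    (t : ℕ → ℕ → ℝ) (ht : ∀ i i', t i i' = ∫ ω, a i ω * a i' ω)
    (k : ℕ) (hk : 1 ≤ k) :
    ∃ C' : ℝ, 0 ≤ C' ∧ ∀ i : ℕ → ℕ, Monotone i →
      |(∫ ω, ∏ r ∈ range (2*k), a (i r) ω) - ∏ l ∈ range k, t (i (2*l)) (i (2*l+1))|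
        ≤ C' * ∑ l ∈ range k, (if 0 < l then α ^ (i (2*l) - i (2*l-1)) else 0) := by
  induction k, hk using Nat.le_induction with
  | base =>
    refine ⟨0, le_refl 0, fun i hi => ?_⟩
    have hI : (∫ ω, ∏ r ∈ range (2*1), a (i r) ω) = t (i 0) (i 1) := by
      rw [ht]
      apply integral_congr_ae
      filter_upwards with ω
      show ∏ r ∈ range 2, a (i r) ω = _
      rw [Finset.prod_range_succ, Finset.prod_range_one]
    rw [hI]
    simp
  | succ k hk ih =>
    obtain ⟨Ck, hCk0, hCk⟩ := ih
    set D : ℝ := C * M ^ (2*k+2) * (S.card : ℝ) ^ (2*k+2) with hD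
    have hD0 : 0 ≤ D := by positivity
    refine ⟨D + M^2 * Ck, by positivity, fun i hi => ?_⟩
    have h2k : 2 * (k+1) = 2*k+2 := by ring
    set j : Fin (2*k+2) → ℕ := fun u => i u.val with hj
    have hjm : Monotone j := fun u v huv => hi huv
    set l : Fin (2*k+2) := ⟨2*k, by omega⟩ with hl
    have hcov := cov_bound S a hmeas hvals C α hC hα0 hmix M hM0 hM j hjm l (by simp [hl]; omega)
    -- conversions
    have e1 : (∫ ω, ∏ u : Fin (2*k+2), a (j u) ω) = ∫ ω, ∏ r ∈ range (2*k+2), a (i r) ω := by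
      apply integral_congr_ae; filter_upwards with ω
      exact Fin.prod_univ_eq_prod_range (fun r => a (i r) ω) (2*k+2)
    have e2 : (∫ ω, ∏ u ∈ univ.filter (fun u => u < l), a (j u) ω)
        = ∫ ω, ∏ r ∈ range (2*k), a (i r) ω := by
      apply integral_congr_ae; filter_upwards with ω
      exact prod_filter_lt_fin (by omega) (fun r => a (i r) ω)
    have hpair : (univ.filter (fun u : Fin (2*k+2) => l ≤ u))
        = {⟨2*k, by omega⟩, ⟨2*k+1, by omega⟩} := by
      ext u
      simp [hl, Fin.le_def, Fin.ext_iff]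
      omega
    have e3 : (∫ ω, ∏ u ∈ univ.filter (fun u => l ≤ u), a (j u) ω)
        = t (i (2*k)) (i (2*k+1)) := by
      rw [ht]
      apply integral_congr_ae; filter_upwards with ω
      rw [hpair, Finset.prod_pair (by simp [Fin.ext_iff])]
    rw [e1, e2, e3] at hcov
    -- notation
    set E : ℝ := ∫ ω, ∏ r ∈ range (2*k+2), a (i r) ω with hE
    set X : ℝ := ∫ ω, ∏ r ∈ range (2*k), a (i r) ω with hX
    set T : ℝ := t (i (2*k)) (i (2*k+1)) with hT
    set P : ℝ := ∏ l ∈ range k, t (i (2*l)) (i (2*l+1)) with hP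
    set Sk : ℝ := ∑ l ∈ range k, (if 0 < l then α ^ (i (2*l) - i (2*l-1)) else 0) with hSk
    have hSk0 : 0 ≤ Sk := by
      apply Finset.sum_nonneg
      intro l _
      split
      · positivity
      · exact le_refl (0:ℝ)
    have hXP : |X - P| ≤ Ck * Sk := hCk i hi
    have hTb : |T| ≤ M^2 := by
      rw [hT, ht]
      have : ‖∫ ω, a (i (2*k)) ω * a (i (2*k+1)) ω‖ ≤ (M * M) * ((volume : Measure Ω) Set.univ).toReal := by
        apply norm_integral_le_of_norm_le_const
        filter_upwards with ω
        rw [Real.norm_eq_abs, abs_mul]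
        exact mul_le_mul (hM _ (hvals _ ω)) (hM _ (hvals _ ω)) (abs_nonneg _) hM0
      rw [Real.norm_eq_abs] at this
      simpa [measure_univ, pow_two] using this
    have hg : (j l - j ⟨l.val - 1, by omega⟩) = i (2*k) - i (2*k-1) := rfl
    rw [hg] at hcov
    set G : ℝ := α ^ (i (2*k) - i (2*k-1)) with hG
    have hG0 : 0 ≤ G := by positivity
    -- rewrite goal
    have hProd : ∏ l ∈ range (k+1), t (i (2*l)) (i (2*l+1)) = P * T := by
      rw [Finset.prod_range_succ]
    have hSum : ∑ l ∈ range (k+1), (if 0 < l then α ^ (i (2*l) - i (2*l-1)) else 0)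
        = Sk + G := by
      rw [Finset.sum_range_succ, if_pos (show 0 < k by omega)]
    rw [h2k, hProd, hSum]
    have tri : |E - P * T| ≤ |E - X * T| + |T| * |X - P| := by
      have : E - P * T = (E - X * T) + T * (X - P) := by ring
      rw [this]
      calc |(E - X * T) + T * (X - P)| ≤ |E - X * T| + |T * (X - P)| := abs_add_le _ _
        _ = |E - X * T| + |T| * |X - P| := by rw [abs_mul]
    calc |E - P * T| ≤ |E - X * T| + |T| * |X - P| := tri
      _ ≤ D * G + M^2 * (Ck * Sk) := by
          apply add_le_add hcov
          apply mul_le_mul hTb hXP (abs_nonneg _) (by positivity)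
      _ ≤ (D + M^2 * Ck) * (Sk + G) := by nlinarith [mul_nonneg (mul_nonneg (sq_nonneg M) hCk0) hG0, mul_nonneg hD0 hSk0]

end Aux

/-- **Pairing expansion of even mixed moments (condition (A1)).** Let `{a(i)}` be a stationary
process with values in a finite state space `S ⊆ ℝ`, `E[a(0)] = 0`, satisfying the mixing
estimate (3.2), and let `t(i,i') = E[a(i)·a(i')]`. Then for every `k ≥ 1` there is a constant
`C' ≥ 0` (depending only on `C`, `α` and `k`) such that for all `i_1 ≤ … ≤ i_{2k}`:
`E[a(i_1)⋯a(i_{2k})] = ∏_{l=1}^{k} t(i_{2l-1}, i_{2l}) + R(i_1,…,i_{2k})` with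
`|R(i_1,…,i_{2k})| ≤ C'·Σ_{l=1}^{k-1} α^{i_{2l+1} - i_{2l}}`. -/
theorem even_moment_pairing_expansion
    {Ω : Type} [MeasureSpace Ω] [IsProbabilityMeasure (volume : Measure Ω)]
    (S : Finset ℝ) (hS : 2 ≤ S.card)
    (a : ℕ → Ω → ℝ) (hmeas : ∀ i, Measurable (a i))
    (hvals : ∀ i ω, a i ω ∈ S)
    (hstat : ∀ h : ℕ, IdentDistrib (fun ω => fun i : ℕ => a (i + h) ω)
      (fun ω => fun i : ℕ => a i ω) volume volume)
    (hmean : ∫ ω, a 0 ω = 0)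
    (C α : ℝ) (hC : 0 < C) (hα0 : 0 ≤ α) (hα1 : α < 1)
    (hmix : MixingEstimate a C α)
    (t : ℕ → ℕ → ℝ) (ht : ∀ i i', t i i' = ∫ ω, a i ω * a i' ω)
    (k : ℕ) (hk : 1 ≤ k) :
    ∃ C' : ℝ, 0 ≤ C' ∧
      ∀ i : Fin (2 * k) → ℕ, Monotone i →
        |(∫ ω, ∏ r : Fin (2 * k), a (i r) ω)
            - ∏ l : Fin k, t (i ⟨2 * l.val, by omega⟩) (i ⟨2 * l.val + 1, by omega⟩)|
          ≤ C' * ∑ l : Fin k,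
              (if 0 < l.val then
                α ^ (i ⟨2 * l.val, by omega⟩ - i ⟨2 * l.val - 1, by omega⟩)
              else 0) := by
  -- the bound M on values
  have hne : S.Nonempty := Finset.card_pos.1 (by omega)
  set M : ℝ := S.sup' hne (fun x => |x|) with hMdef
  have hM : ∀ x ∈ S, |x| ≤ M := fun x hx => Finset.le_sup' _ hx
  have hM0 : 0 ≤ M := le_trans (abs_nonneg _) (hM _ hne.choose_spec)
  obtain ⟨C', hC'0, hC'⟩ := aux_moment S a hmeas hvals C α hC.le hα0 hmix M hM0 hM t ht k hk
  refine ⟨C', hC'0, fun i hi => ?_⟩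
  have h2k1 : 2*k - 1 < 2*k := by omega
  set i' : ℕ → ℕ := fun r => i ⟨min r (2*k-1), by omega⟩ with hi'
  have hi'm : Monotone i' := by
    intro r r' hrr
    apply hi
    simp only [Fin.mk_le_mk]
    omega
  have hival : ∀ (r : ℕ) (hr : r < 2*k), i' r = i ⟨r, hr⟩ := by
    intro r hr
    simp only [hi']
    congr 1
    exact Fin.ext (by simp; omega)
  have e1 : (∫ ω, ∏ r : Fin (2*k), a (i r) ω) = ∫ ω, ∏ r ∈ range (2*k), a (i' r) ω := by
    apply integral_congr_ae; filter_upwards with ω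
    rw [← Fin.prod_univ_eq_prod_range (fun r => a (i' r) ω) (2*k)]
    apply Finset.prod_congr rfl
    intro u _
    rw [hival u.val u.isLt]
  have e2 : ∏ l : Fin k, t (i ⟨2 * l.val, by omega⟩) (i ⟨2 * l.val + 1, by omega⟩)
      = ∏ l ∈ range k, t (i' (2*l)) (i' (2*l+1)) := by
    rw [← Fin.prod_univ_eq_prod_range (fun l => t (i' (2*l)) (i' (2*l+1))) k]
    apply Finset.prod_congr rfl
    intro u _
    rw [hival (2*u.val) (by omega), hival (2*u.val+1) (by omega)]
  have e3 : (∑ l : Fin k, (if 0 < l.val then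
        α ^ (i ⟨2 * l.val, by omega⟩ - i ⟨2 * l.val - 1, by omega⟩) else 0))
      = ∑ l ∈ range k, (if 0 < l then α ^ (i' (2*l) - i' (2*l-1)) else 0) := by
    rw [← Fin.sum_univ_eq_sum_range (fun l => if 0 < l then α ^ (i' (2*l) - i' (2*l-1)) else 0) k]
    apply Finset.sum_congr rfl
    intro u _
    by_cases hu : 0 < u.val
    · rw [if_pos hu, if_pos hu, hival (2*u.val) (by omega), hival (2*u.val-1) (by omega)]
    · rw [if_neg hu, if_neg hu]
  rw [e1, e2, e3]
  exact hC' i' hi'm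
end

section
/- Let {a(i,j): i∈ℕ}, j∈ℕ, be independent, identically distributed copies of a real-valued stationary sequence with finite moments of all orders, let X_n=(a(i,j))_{1≤i≤m,1≤j≤n} and W_n=(1/n)X_nX_nᵀ. Then for every k∈ℕ, (1/m)·E[tr(W_n^k)] = (1/(m·n^k)) · Σ_{π∈P(k)} n·(n−1)·…·(n−#π+1) · Σ_{i_1,…,i_k=1}^{m} ∏_{s=1}^{#π} E[ ∏_{l∈B^{(s)}_π} a(i_l,1)·a(i_{l+1},1) ], where P(k) is the set of all partitions of {1,…,k}, B^{(1)}_π,…,B^{(#π)}_π are the blocks of π, and i_{k+1} is identified with i_1. -/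
open MeasureTheory ProbabilityTheory Filter Finset

/-! ### Auxiliary lemmas -/

section MatrixChain

/-- The chain `x, i 0, …, i (k-1), y` as a function `Fin (k+2) → Fin m`. -/
def chain {m k : ℕ} (x y : Fin m) (i : Fin k → Fin m) : Fin (k+2) → Fin m :=
  Fin.cons x (Fin.snoc i y)

lemma chain_cons {m k : ℕ} (z : Fin m) (i : Fin k → Fin m) (x y : Fin m) :
    chain x y (Fin.cons z i) = Fin.cons x (chain z y i) := by
  simp [chain, Fin.cons_snoc_eq_snoc_cons]

lemma pow_apply_chain {m : ℕ} (M : Matrix (Fin m) (Fin m) ℝ) :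
    ∀ (k : ℕ) (x y : Fin m), (M ^ (k+1)) x y
      = ∑ i : Fin k → Fin m, ∏ l : Fin (k+1),
          M (chain x y i l.castSucc) (chain x y i l.succ) := by
  intro k
  induction k with
  | zero =>
    intro x y
    simp [chain, Fin.prod_univ_succ, pow_one, Fin.snoc]
  | succ k ih =>
    intro x y
    rw [pow_succ', Matrix.mul_apply]
    simp_rw [ih, Finset.mul_sum]
    rw [show (∑ i : Fin (k+1) → Fin m, ∏ l : Fin (k+1+1),
          M (chain x y i l.castSucc) (chain x y i l.succ))
        = ∑ p : Fin m × (Fin k → Fin m), ∏ l : Fin (k+1+1),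
          M (chain x y (Fin.consEquiv (fun _ => Fin m) p) l.castSucc)
            (chain x y (Fin.consEquiv (fun _ => Fin m) p) l.succ) from
      ((Fin.consEquiv (fun _ => Fin m)).sum_comp _).symm, Fintype.sum_prod_type]
    refine Finset.sum_congr rfl fun z _ => Finset.sum_congr rfl fun i _ => ?_
    have hce : (Fin.consEquiv (fun _ : Fin (k+1) => Fin m)) (z, i) = Fin.cons z i := rfl
    rw [hce]
    conv_rhs => rw [chain_cons, Fin.prod_univ_succ]
    congr 1

lemma chain_castSucc {m k : ℕ} (x : Fin m) (i : Fin k → Fin m) (l : Fin (k+1)) :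
    chain x x i l.castSucc = (Fin.cons x i : Fin (k+1) → Fin m) l := by
  induction l using Fin.cases with
  | zero => simp [chain]
  | succ t => rw [← Fin.succ_castSucc]; simp [chain, Fin.cons_succ]

lemma chain_succ {m k : ℕ} (x : Fin m) (i : Fin k → Fin m) (l : Fin (k+1)) :
    chain x x i l.succ = (Fin.cons x i : Fin (k+1) → Fin m) (l + 1) := by
  induction l using Fin.lastCases with
  | last =>
    rw [Fin.succ_last, Fin.last_add_one, Fin.cons_zero]
    show (Fin.cons x (Fin.snoc i x) : Fin (k+2) → Fin m) (Fin.last (k+1)) = x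
    rw [← Fin.succ_last, Fin.cons_succ, Fin.snoc_last]
  | cast t =>
    rw [Fin.succ_castSucc, chain_castSucc, Fin.coeSucc_eq_succ]

lemma trace_pow_chain {m k : ℕ} (M : Matrix (Fin m) (Fin m) ℝ) :
    (M ^ (k+1)).trace = ∑ j : Fin (k+1) → Fin m, ∏ l : Fin (k+1), M (j l) (j (l+1)) := by
  rw [show (∑ j : Fin (k+1) → Fin m, ∏ l : Fin (k+1), M (j l) (j (l+1)))
      = ∑ p : Fin m × (Fin k → Fin m), ∏ l : Fin (k+1),
          M ((Fin.consEquiv (fun _ => Fin m)) p l) ((Fin.consEquiv (fun _ => Fin m)) p (l+1)) from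
    ((Fin.consEquiv (fun _ => Fin m)).sum_comp _).symm, Fintype.sum_prod_type]
  rw [Matrix.trace]
  refine Finset.sum_congr rfl fun x _ => ?_
  rw [Matrix.diag_apply, pow_apply_chain M k x x]
  refine Finset.sum_congr rfl fun i _ => Finset.prod_congr rfl fun l _ => ?_
  have hce : (Fin.consEquiv (fun _ : Fin (k+1) => Fin m)) (x, i) = Fin.cons x i := rfl
  rw [hce, chain_castSucc, chain_succ]

end MatrixChain

section KernelPartition

variable {α : Type*} [Fintype α] [DecidableEq α]

instance kerDec {β : Type*} [DecidableEq β] (col : α → β) : DecidableRel (Setoid.ker col).r :=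
  fun x y => (inferInstance : Decidable (col x = col y))

/-- The partition of `α` into the fibers of `col`. -/
def kernelPart {β : Type*} (col : α → β) [DecidableEq β] :
    Finpartition (univ : Finset α) :=
  Finpartition.ofSetoid (Setoid.ker col)

lemma mem_part_kernelPart {β : Type*} [DecidableEq β] (col : α → β) (x y : α) :
    y ∈ (kernelPart col).part x ↔ col x = col y := by
  rw [kernelPart, Finpartition.mem_part_ofSetoid_iff_rel]
  rfl

lemma finpartition_eq_of_part_eq {P Q : Finpartition (univ : Finset α)}
    (h : ∀ x, P.part x = Q.part x) : P = Q := by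
  ext t
  constructor
  · intro ht
    obtain ⟨x, hx⟩ := P.nonempty_of_mem_parts ht
    rw [← P.part_eq_of_mem ht hx, h]
    exact Q.part_mem.2 (mem_univ x)
  · intro ht
    obtain ⟨x, hx⟩ := Q.nonempty_of_mem_parts ht
    rw [← Q.part_eq_of_mem ht hx, ← h]
    exact P.part_mem.2 (mem_univ x)

lemma kernelPart_eq_iff {β : Type*} [DecidableEq β] (col : α → β)
    (P : Finpartition (univ : Finset α)) :
    kernelPart col = P ↔ ∀ x y, col x = col y ↔ y ∈ P.part x := by
  constructor
  · rintro rfl x y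
    exact (mem_part_kernelPart col x y).symm
  · intro h
    refine finpartition_eq_of_part_eq fun x => ?_
    ext y
    rw [mem_part_kernelPart, h]

noncomputable def kernelFiberEquiv {β : Type*} [DecidableEq β]
    (P : Finpartition (univ : Finset α)) :
    {col : α → β // kernelPart col = P} ≃ ({B : Finset α // B ∈ P.parts} ↪ β) where
  toFun col := by
    refine ⟨fun B => col.1 (P.nonempty_of_mem_parts B.2).choose, ?_⟩
    intro B B' hBB'
    have h := (kernelPart_eq_iff col.1 P).1 col.2
    have hmem : (P.nonempty_of_mem_parts B'.2).choose ∈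
        P.part (P.nonempty_of_mem_parts B.2).choose := (h _ _).1 hBB'
    have h1 : P.part (P.nonempty_of_mem_parts B.2).choose = B.1 :=
      P.part_eq_of_mem B.2 (P.nonempty_of_mem_parts B.2).choose_spec
    have h2 : P.part (P.nonempty_of_mem_parts B'.2).choose = B'.1 :=
      P.part_eq_of_mem B'.2 (P.nonempty_of_mem_parts B'.2).choose_spec
    refine Subtype.ext ?_
    rw [← h1, ← h2]
    exact ((P.mem_part_iff_part_eq_part (mem_univ _) (mem_univ _)).1 hmem).symm ▸ rfl
  invFun g := by
    refine ⟨fun l => g ⟨P.part l, P.part_mem.2 (mem_univ l)⟩, ?_⟩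
    rw [kernelPart_eq_iff]
    intro x y
    rw [P.mem_part_iff_part_eq_part (mem_univ y) (mem_univ x)]
    constructor
    · intro hxy
      have := g.injective hxy
      exact (Subtype.ext_iff.1 this).symm
    · intro hyx
      congr 1
      exact Subtype.ext hyx.symm
  left_inv col := by
    refine Subtype.ext (funext fun l => ?_)
    have h := (kernelPart_eq_iff col.1 P).1 col.2
    have hmem : (P.nonempty_of_mem_parts (P.part_mem.2 (mem_univ l))).choose ∈ P.part l :=
      (P.nonempty_of_mem_parts (P.part_mem.2 (mem_univ l))).choose_spec
    exact ((h l _).2 hmem).symm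
  right_inv g := by
    refine Function.Embedding.ext fun B => ?_
    have h1 : P.part (P.nonempty_of_mem_parts B.2).choose = B.1 :=
      P.part_eq_of_mem B.2 (P.nonempty_of_mem_parts B.2).choose_spec
    exact congrArg g (Subtype.ext h1)

lemma card_kernel_fiber {n : ℕ} (P : Finpartition (univ : Finset α)) :
    (univ.filter fun col : α → Fin n => kernelPart col = P).card
      = n.descFactorial P.parts.card := by
  classical
  rw [← Fintype.card_subtype]
  rw [Fintype.card_congr (kernelFiberEquiv P)]
  rw [Fintype.card_embedding_eq, Fintype.card_fin]
  congr 1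
  exact Fintype.card_coe _

end KernelPartition

section Integrability

variable {Ω : Type} [MeasureSpace Ω] [IsProbabilityMeasure (volume : Measure Ω)]

lemma prod_le_one_add_sum_pow {ι : Type*} (s : Finset ι) (y : ι → ℝ) (hy : ∀ t ∈ s, 0 ≤ y t) :
    ∏ t ∈ s, y t ≤ 1 + ∑ t ∈ s, y t ^ s.card := by
  rcases s.eq_empty_or_nonempty with rfl | hs
  · simp
  obtain ⟨t0, ht0, hmax⟩ := s.exists_max_image y hs
  rcases le_or_gt (y t0) 1 with h1 | h1
  · calc ∏ t ∈ s, y t ≤ 1 := Finset.prod_le_one hy (fun t ht => le_trans (hmax t ht) h1)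
    _ ≤ 1 + ∑ t ∈ s, y t ^ s.card := le_add_of_nonneg_right <|
        Finset.sum_nonneg fun t ht => pow_nonneg (hy t ht) _
  · calc ∏ t ∈ s, y t ≤ ∏ _t ∈ s, y t0 :=
        Finset.prod_le_prod hy (fun t ht => hmax t ht)
    _ = y t0 ^ s.card := by rw [Finset.prod_const]
    _ ≤ ∑ t ∈ s, y t ^ s.card := Finset.single_le_sum
        (fun t ht => pow_nonneg (hy t ht) _) ht0
    _ ≤ 1 + ∑ t ∈ s, y t ^ s.card := le_add_of_nonneg_left zero_le_one

lemma integrable_prod_of_moments {ι : Type*} (s : Finset ι) (f : ι → Ω → ℝ)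
    (hm : ∀ t, Measurable (f t)) (hp : ∀ t p, Integrable (fun ω => |f t ω| ^ p) volume) :
    Integrable (fun ω => ∏ t ∈ s, f t ω) volume := by
  have hints : Integrable (fun ω => 1 + ∑ t ∈ s, |f t ω| ^ s.card) volume :=
    (integrable_const 1).add (integrable_finset_sum s fun t _ => hp t s.card)
  refine hints.mono ?_ ?_
  · exact (Finset.measurable_prod s fun t _ => hm t).aestronglyMeasurable
  · refine Filter.Eventually.of_forall fun ω => ?_
    have h1 : ‖∏ t ∈ s, f t ω‖ = ∏ t ∈ s, |f t ω| := by
      rw [Real.norm_eq_abs, Finset.abs_prod]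
    have h2 : ∏ t ∈ s, |f t ω| ≤ 1 + ∑ t ∈ s, |f t ω| ^ s.card :=
      prod_le_one_add_sum_pow s _ (fun t _ => abs_nonneg _)
    rw [h1, Real.norm_eq_abs]
    refine h2.trans (le_abs_self _)

lemma integrable_prod_mul (a : ℕ → ℕ → Ω → ℝ) (hmeas : ∀ i j, Measurable (a i j))
    (hmom : ∀ (p i j : ℕ), Integrable (fun ω => |a i j ω| ^ p) volume)
    {k : ℕ} (s : Finset (Fin k)) (u v c : Fin k → ℕ) :
    Integrable (fun ω => ∏ l ∈ s, a (u l) (c l) ω * a (v l) (c l) ω) volume := by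
  have key := integrable_prod_of_moments (s ×ˢ (univ : Finset Bool))
    (fun p ω => a (if p.2 then u p.1 else v p.1) (c p.1) ω)
    (fun t => hmeas _ _) (fun t p => hmom p _ _)
  convert key using 2 with ω
  rw [Finset.prod_product]
  refine Finset.prod_congr rfl fun l _ => ?_
  rw [Fintype.prod_bool]
  simp

lemma prod_fn_eq {Y : ℕ → Ω → ℝ} (s : Finset ℕ) :
    (∏ j ∈ s, Y j) = fun ω => ∏ j ∈ s, Y j ω := by
  ext ω; simp

lemma indep_integrable_prod {Y : ℕ → Ω → ℝ}
    (h : iIndepFun (m := fun _ : ℕ => (inferInstance : MeasurableSpace ℝ)) Y volume)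
    (hm : ∀ j, Measurable (Y j)) (hi : ∀ j, Integrable (Y j) volume) (t : Finset ℕ) :
    Integrable (fun ω => ∏ j ∈ t, Y j ω) volume := by
  classical
  induction t using Finset.cons_induction with
  | empty => simp only [Finset.prod_empty]; exact integrable_const 1
  | cons c s hc ih =>
    simp_rw [Finset.prod_cons]
    have hind : IndepFun (∏ j ∈ s, Y j) (Y c) volume :=
      h.indepFun_finsetProd_of_notMem hm hc
    have := hind.symm.integrable_mul (hi c) (by rw [prod_fn_eq]; exact ih)
    rw [Pi.mul_def, prod_fn_eq] at this
    exact this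

lemma indep_integral_prod {Y : ℕ → Ω → ℝ}
    (h : iIndepFun (m := fun _ : ℕ => (inferInstance : MeasurableSpace ℝ)) Y volume)
    (hm : ∀ j, Measurable (Y j)) (hi : ∀ j, Integrable (Y j) volume) (t : Finset ℕ) :
    ∫ ω, ∏ j ∈ t, Y j ω = ∏ j ∈ t, ∫ ω, Y j ω := by
  classical
  induction t using Finset.cons_induction with
  | empty => simp
  | cons c s hc ih =>
    simp_rw [Finset.prod_cons]
    have hind : IndepFun (∏ j ∈ s, Y j) (Y c) volume :=
      h.indepFun_finsetProd_of_notMem hm hc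
    have hint : Integrable (∏ j ∈ s, Y j) volume := by
      rw [prod_fn_eq]; exact indep_integrable_prod h hm hi s
    have := hind.symm.integral_mul_eq_mul_integral (hi c).aestronglyMeasurable hint.aestronglyMeasurable
    rw [Pi.mul_def, prod_fn_eq] at this
    simp only [Finset.prod_apply] at this
    rw [this, ih]

lemma core_factorization
    (a : ℕ → ℕ → Ω → ℝ) (hmeas : ∀ i j, Measurable (a i j))
    (hindep : iIndepFun (m := fun _ : ℕ => (inferInstance : MeasurableSpace (ℕ → ℝ)))
      (fun j => fun ω => fun i : ℕ => a i j ω) volume)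
    (hid : ∀ j : ℕ, IdentDistrib (fun ω => fun i : ℕ => a i j ω)
      (fun ω => fun i : ℕ => a i 0 ω) volume volume)
    (hmom : ∀ (p i j : ℕ), Integrable (fun ω => |a i j ω| ^ p) volume)
    {k mm nn : ℕ} [NeZero k] (i : Fin k → Fin mm) (col : Fin k → Fin nn)
    (P : Finpartition (univ : Finset (Fin k))) (hker : kernelPart col = P) :
    ∫ ω, ∏ l : Fin k, a (i l).val (col l).val ω * a (i (l+1)).val (col l).val ω
      = ∏ B ∈ P.parts, ∫ ω, ∏ l ∈ B, a (i l).val 0 ω * a (i (l+1)).val 0 ω := by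
  classical
  have hrel := (kernelPart_eq_iff col P).1 hker
  set fib : ℕ → Finset (Fin k) := fun c => univ.filter (fun l => (col l).val = c) with hfib
  set colset : Finset ℕ := univ.image (fun l => (col l).val) with hcolset
  set φ : ℕ → (ℕ → ℝ) → ℝ :=
    fun c v => ∏ l ∈ fib c, v (i l).val * v (i (l+1)).val with hφ
  have hφmeas : ∀ c, Measurable (φ c) := by
    intro c
    exact Finset.measurable_prod _ fun l _ =>
      (measurable_pi_apply _).mul (measurable_pi_apply _)
  set Y : ℕ → Ω → ℝ := fun c ω => φ c (fun r => a r c ω) with hY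
  have step1 : ∀ ω, (∏ l : Fin k, a (i l).val (col l).val ω * a (i (l+1)).val (col l).val ω)
      = ∏ c ∈ colset, Y c ω := by
    intro ω
    have base := Finset.prod_fiberwise_of_maps_to
      (fun (l : Fin k) (_ : l ∈ univ) =>
        Finset.mem_image_of_mem (fun l => (col l).val) (mem_univ l))
      (fun l => a (i l).val (col l).val ω * a (i (l+1)).val (col l).val ω)
    simp only [hY, hφ, hfib, hcolset]
    rw [← base]
    refine Finset.prod_congr rfl fun c _ => Finset.prod_congr rfl fun l hl => ?_
    rw [(Finset.mem_filter.1 hl).2]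
  simp_rw [step1]
  have hYindep : iIndepFun (m := fun _ : ℕ => (inferInstance : MeasurableSpace ℝ)) Y volume :=
    hindep.comp φ hφmeas
  have hYmeas : ∀ c, Measurable (Y c) := fun c =>
    (hφmeas c).comp (measurable_pi_lambda _ (fun r => hmeas r c))
  have hYint : ∀ c, Integrable (Y c) volume := fun c =>
    integrable_prod_mul a hmeas hmom (fib c) _ _ _
  rw [indep_integral_prod hYindep hYmeas hYint colset]
  have step3 : ∀ c, ∫ ω, Y c ω = ∫ ω, ∏ l ∈ fib c, a (i l).val 0 ω * a (i (l+1)).val 0 ω := by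
    intro c
    have := ((hid c).comp (hφmeas c)).integral_eq
    simpa [hY, hφ, Function.comp] using this
  have hfib_part : ∀ l₀ : Fin k, fib ((col l₀).val) = P.part l₀ := by
    intro l₀
    ext y
    simp only [hfib, Finset.mem_filter, mem_univ, true_and, Fin.val_eq_val]
    rw [← hrel l₀ y, eq_comm]
  refine Finset.prod_bij (fun c _ => fib c) ?_ ?_ ?_ ?_
  · intro c hc
    obtain ⟨l₀, _, hl₀⟩ := Finset.mem_image.1 hc
    show fib c ∈ P.parts
    rw [← hl₀, hfib_part]; exact P.part_mem.2 (mem_univ l₀)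
  · intro c hc c' hc' hcc'
    obtain ⟨l₀, _, hl₀⟩ := Finset.mem_image.1 hc
    have hcc2 : fib c = fib c' := hcc'
    have hmem : l₀ ∈ fib c := by simp [hfib, hl₀]
    rw [hcc2] at hmem
    simp only [hfib, Finset.mem_filter] at hmem
    rw [← hl₀, hmem.2]
  · intro B hB
    obtain ⟨l₀, hl₀⟩ := P.nonempty_of_mem_parts hB
    refine ⟨(col l₀).val, Finset.mem_image_of_mem _ (mem_univ l₀), ?_⟩
    have hpart : P.part l₀ = B := P.part_eq_of_mem hB hl₀
    show fib ((col l₀).val) = B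
    rw [hfib_part]; exact hpart
  · intro c hc
    exact step3 c

end Integrability

/-- **Expansion of the expected trace over partitions (independence of the columns).**
Let `{a(i,j) : i ∈ ℕ}`, `j ∈ ℕ`, be independent, identically distributed copies of a
real-valued stationary sequence with finite moments of all orders, let
`X_n = (a(i,j))_{1≤i≤m,1≤j≤n}` and `W_n = (1/n)·X_n·X_nᵀ`. Then for every `k ≥ 1`,
`(1/m)·E[tr(W_n^k)] = (1/(m·n^k)) Σ_{π ∈ P(k)} n·(n-1)⋯(n-#π+1)
  Σ_{i_1,…,i_k=1}^{m} ∏_{s=1}^{#π} E[∏_{l ∈ B_π^{(s)}} a(i_l,1)·a(i_{l+1},1)]`,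
where `P(k)` is the set of all partitions of `{1,…,k}` and `i_{k+1}` is identified with
`i_1` (the index `l+1` is taken cyclically). -/
theorem expected_trace_partition_expansion
    {Ω : Type} [MeasureSpace Ω] [IsProbabilityMeasure (volume : Measure Ω)]
    (a : ℕ → ℕ → Ω → ℝ) (hmeas : ∀ i j, Measurable (a i j))
    (hindep : iIndepFun (m := fun _ : ℕ => (inferInstance : MeasurableSpace (ℕ → ℝ)))
      (fun j => fun ω => fun i : ℕ => a i j ω) volume)
    (hid : ∀ j : ℕ, IdentDistrib (fun ω => fun i : ℕ => a i j ω)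
      (fun ω => fun i : ℕ => a i 0 ω) volume volume)
    (hstat : ∀ h : ℕ, IdentDistrib (fun ω => fun i : ℕ => a (i + h) 0 ω)
      (fun ω => fun i : ℕ => a i 0 ω) volume volume)
    (hmom : ∀ (p : ℕ) (i j : ℕ), Integrable (fun ω => |a i j ω| ^ p) volume)
    (mm nn : ℕ) (hmm : 0 < mm) (hnn : 0 < nn)
    (W : Ω → Matrix (Fin mm) (Fin mm) ℝ)
    (hW : ∀ ω, W ω = (nn : ℝ)⁻¹ •
      ((Matrix.of fun (i : Fin mm) (j : Fin nn) => a i.val j.val ω) *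
        Matrix.transpose (Matrix.of fun (i : Fin mm) (j : Fin nn) => a i.val j.val ω)))
    (k : ℕ) [NeZero k] :
    (mm : ℝ)⁻¹ * ∫ ω, ((W ω ^ k).trace)
      = ((mm : ℝ) * (nn : ℝ) ^ k)⁻¹ *
          ∑ P : Finpartition (Finset.univ : Finset (Fin k)),
            (nn.descFactorial P.parts.card : ℝ) *
              ∑ i : Fin k → Fin mm,
                ∏ B ∈ P.parts,
                  ∫ ω, ∏ l ∈ B, a (i l).val 0 ω * a (i (l + 1)).val 0 ω := by
  classical
  obtain ⟨k', rfl⟩ : ∃ k', k = k' + 1 := by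
    obtain ⟨k', hk⟩ := Nat.exists_eq_succ_of_ne_zero (NeZero.ne k)
    exact ⟨k', hk⟩
  set k := k' + 1
  -- Expansion of the trace of `W ω ^ k`
  have hexp : ∀ ω, (W ω ^ k).trace
      = ((nn : ℝ)⁻¹) ^ k * ∑ j : Fin k → Fin mm, ∑ col : Fin k → Fin nn,
          ∏ l : Fin k, a (j l).val (col l).val ω * a (j (l+1)).val (col l).val ω := by
    intro ω
    rw [trace_pow_chain, Finset.mul_sum]
    refine Finset.sum_congr rfl fun j _ => ?_
    have hentry : ∀ x y : Fin mm, W ω x y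
        = (nn : ℝ)⁻¹ * ∑ c : Fin nn, a x.val c.val ω * a y.val c.val ω := by
      intro x y
      rw [hW ω]
      simp [Matrix.smul_apply, Matrix.mul_apply, Matrix.transpose_apply, smul_eq_mul]
    simp_rw [hentry]
    rw [Finset.prod_mul_distrib, Finset.prod_const, Finset.card_univ, Fintype.card_fin]
    congr 1
    rw [Finset.prod_univ_sum]
    rw [Fintype.piFinset_univ]
  -- integrate term by term
  have hint : ∀ (j : Fin k → Fin mm) (col : Fin k → Fin nn),
      Integrable (fun ω => ∏ l : Fin k,
        a (j l).val (col l).val ω * a (j (l+1)).val (col l).val ω) volume :=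
    fun j col => integrable_prod_mul a hmeas hmom univ _ _ _
  have hItr : ∫ ω, (W ω ^ k).trace
      = ((nn : ℝ)⁻¹) ^ k * ∑ j : Fin k → Fin mm, ∑ col : Fin k → Fin nn,
          ∫ ω, ∏ l : Fin k, a (j l).val (col l).val ω * a (j (l+1)).val (col l).val ω := by
    rw [show (fun ω => (W ω ^ k).trace) = fun ω => ((nn : ℝ)⁻¹) ^ k *
        ∑ j : Fin k → Fin mm, ∑ col : Fin k → Fin nn,
          ∏ l : Fin k, a (j l).val (col l).val ω * a (j (l+1)).val (col l).val ω
      from funext hexp]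
    rw [integral_const_mul]
    congr 1
    rw [integral_finset_sum _ (fun j _ => integrable_finset_sum _ (fun col _ => hint j col))]
    refine Finset.sum_congr rfl fun j _ => ?_
    rw [integral_finset_sum _ (fun col _ => hint j col)]
  rw [hItr]
  -- group the columns according to their kernel partition
  have hgroup : ∀ j : Fin k → Fin mm,
      (∑ col : Fin k → Fin nn,
        ∫ ω, ∏ l : Fin k, a (j l).val (col l).val ω * a (j (l+1)).val (col l).val ω)
      = ∑ P : Finpartition (Finset.univ : Finset (Fin k)),
          (nn.descFactorial P.parts.card : ℝ) *
            ∏ B ∈ P.parts, ∫ ω, ∏ l ∈ B, a (j l).val 0 ω * a (j (l+1)).val 0 ω := by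
    intro j
    rw [← Finset.sum_fiberwise_of_maps_to
      (g := fun col : Fin k → Fin nn => kernelPart col) (fun col _ => mem_univ _)]
    refine Finset.sum_congr rfl fun P _ => ?_
    have hconst : ∀ col ∈ univ.filter (fun col : Fin k → Fin nn => kernelPart col = P),
        (∫ ω, ∏ l : Fin k, a (j l).val (col l).val ω * a (j (l+1)).val (col l).val ω)
        = ∏ B ∈ P.parts, ∫ ω, ∏ l ∈ B, a (j l).val 0 ω * a (j (l+1)).val 0 ω := by
      intro col hcol
      exact core_factorization a hmeas hindep hid hmom j col P (Finset.mem_filter.1 hcol).2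
    rw [Finset.sum_congr rfl hconst, Finset.sum_const, card_kernel_fiber, nsmul_eq_mul]
  simp_rw [hgroup]
  rw [show (∑ j : Fin k → Fin mm, ∑ P : Finpartition (Finset.univ : Finset (Fin k)),
        (nn.descFactorial P.parts.card : ℝ) *
          ∏ B ∈ P.parts, ∫ ω, ∏ l ∈ B, a (j l).val 0 ω * a (j (l+1)).val 0 ω)
      = ∑ P : Finpartition (Finset.univ : Finset (Fin k)), ∑ j : Fin k → Fin mm,
        (nn.descFactorial P.parts.card : ℝ) *
          ∏ B ∈ P.parts, ∫ ω, ∏ l ∈ B, a (j l).val 0 ω * a (j (l+1)).val 0 ω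
    from Finset.sum_comm]
  simp_rw [Finset.mul_sum]
  refine Finset.sum_congr rfl fun P _ => Finset.sum_congr rfl fun j _ => ?_
  rw [mul_inv, inv_pow]
  ring
end

section
/- Let R: ℕ₀ → ℝ satisfy |R(j)| ≤ C·α^{j} for some C>0 and α∈[0,1), extend R to ℤ by R(−j):=R(j), let T_m = (R(|i−i'|))_{1≤i,i'≤m} be the associated symmetric Toeplitz matrices, and let f:[0,1]→ℝ be the (well-defined, continuous, real-valued) spectral density f(x) = Σ_{j∈ℤ} e^{2πi j x} R(j). Then for every k∈ℕ, lim_{m→∞} (1/m)·tr(T_m^k) = ∫_0^1 f(x)^k dx. -/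
open Filter Complex


section SzegoAux

/-! ### Auxiliary definitions: partial sums of increment vectors -/

def SzExt {k : ℕ} (v : Fin k → ℤ) (n : ℕ) : ℤ := if h : n < k then v ⟨n, h⟩ else 0

def SzP {k : ℕ} (v : Fin k → ℤ) (t : ℕ) : ℤ := ∑ n ∈ Finset.range t, SzExt v n

def SzCond (m : ℕ) {k : ℕ} (i : ℕ) (v : Fin k → ℤ) : Prop :=
  SzP v k = 0 ∧ ∀ t ≤ k, 0 ≤ (i:ℤ) + SzP v t ∧ (i:ℤ) + SzP v t < m

lemma SzP_succ {k : ℕ} (v : Fin k → ℤ) (t : ℕ) : SzP v (t+1) = SzP v t + SzExt v t :=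
  Finset.sum_range_succ _ _

lemma SzP_k_eq {k : ℕ} (v : Fin k → ℤ) : SzP v k = ∑ l, v l := by
  rw [SzP, ← Fin.sum_univ_eq_sum_range]
  exact Finset.sum_congr rfl (fun l _ => by rw [SzExt, dif_pos l.isLt])

lemma SzP_abs_le {k : ℕ} (v : Fin k → ℤ) (t : ℕ) : |SzP v t| ≤ ∑ l, |v l| := by
  calc |SzP v t| ≤ ∑ n ∈ Finset.range t, |SzExt v n| := Finset.abs_sum_le_sum_abs _ _
    _ ≤ ∑ n ∈ Finset.range (max t k), |SzExt v n| :=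
        Finset.sum_le_sum_of_subset_of_nonneg
          (Finset.range_subset_range.2 (le_max_left _ _)) (fun _ _ _ => abs_nonneg _)
    _ = ∑ n ∈ Finset.range k, |SzExt v n| :=
        (Finset.sum_subset (Finset.range_subset_range.2 (le_max_right _ _))
          (fun n _ hn => by
            rw [SzExt, dif_neg (by simpa using hn)]; simp)).symm
    _ = ∑ l, |v l| := by
        rw [← Fin.sum_univ_eq_sum_range]
        exact Finset.sum_congr rfl (fun l _ => by rw [SzExt, dif_pos l.isLt])

lemma natAbs_sub_eq (a b : ℕ) : ((b:ℤ) - a).natAbs = max a b - min a b := by omega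

/-! ### Summability over pi types and tsum of powers -/

lemma summable_pi_prod {h : ℤ → ℝ} (hs : Summable h) (h0 : ∀ j, 0 ≤ h j) :
    ∀ k : ℕ, Summable (fun v : Fin k → ℤ => ∏ l, h (v l)) := by
  intro k
  induction k with
  | zero => exact summable_of_finite_support (Set.toFinite _)
  | succ k ih =>
    have H := (hs.mul_of_nonneg ih h0 (fun v => Finset.prod_nonneg fun l _ => h0 _))
    rw [← Equiv.summable_iff (Fin.consEquiv fun _ => ℤ)]
    convert H using 1
    ext p
    simp [Fin.consEquiv, Fin.prod_univ_succ, Fin.tail]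

lemma tsum_pow_fin {a : ℤ → ℂ} (hs : Summable (fun j => ‖a j‖)) :
    ∀ k : ℕ, (∑' j, a j) ^ k = ∑' v : Fin k → ℤ, ∏ l, a (v l) := by
  intro k
  induction k with
  | zero =>
    simp only [pow_zero]
    rw [tsum_eq_single (default : Fin 0 → ℤ)
      (by intro v hv; exact absurd (Subsingleton.elim v default) hv)]
    simp
  | succ k ih =>
    rw [pow_succ, ih, mul_comm, tsum_mul_tsum_of_summable_norm hs (by
      have := summable_pi_prod hs (fun j => norm_nonneg _) k
      convert this using 1; ext v; simp [norm_prod]), ← (Fin.consEquiv fun _ => ℤ).tsum_eq]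
    congr 1
    ext p
    simp [Fin.consEquiv, Fin.prod_univ_succ, Fin.tail]

/-! ### The Fourier orthogonality relation -/

lemma integral_char (n : ℤ) :
    (∫ x in (0:ℝ)..1, Complex.exp (2 * Real.pi * Complex.I * (n:ℂ) * (x:ℂ)))
      = if n = 0 then 1 else 0 := by
  rcases eq_or_ne n 0 with rfl | hn
  · simp
  · have hc : (2 * Real.pi * Complex.I * (n:ℂ)) ≠ 0 := by
      simp [Real.pi_ne_zero, Complex.I_ne_zero, hn]
    rw [if_neg hn]
    have := integral_exp_mul_complex (a := (0:ℝ)) (b := 1) hc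
    simp only [Complex.ofReal_one, mul_one, Complex.ofReal_zero, mul_zero,
      Complex.exp_zero] at this
    rw [this]
    have : Complex.exp (2 * ↑Real.pi * Complex.I * (n:ℂ)) = 1 := by
      rw [show (2 * (Real.pi:ℂ) * Complex.I * (n:ℂ)) = (n:ℂ) * (2 * Real.pi * Complex.I) by ring]
      exact Complex.exp_int_mul_two_pi_mul_I n
    rw [this]; simp

/-! ### Walk expansion of matrix powers -/

lemma pow_apply_walk {n : Type*} [Fintype n] [DecidableEq n] (A : Matrix n n ℝ) :
    ∀ (k : ℕ) (i j : n), (A ^ k) i j =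
      ∑ w : Fin k → n, if Matrix.vecCons i w (Fin.last k) = j then
        ∏ l : Fin k, A (Matrix.vecCons i w l.castSucc) (Matrix.vecCons i w l.succ) else 0 := by
  intro k
  induction k with
  | zero =>
    intro i j
    rw [Fintype.sum_eq_single (default : Fin 0 → n)
      (fun v hv => absurd (Subsingleton.elim v default) hv)]
    simp [Matrix.one_apply, Fin.last]
  | succ k ih =>
    intro i j
    rw [pow_succ', Matrix.mul_apply]
    simp_rw [ih, Finset.mul_sum]
    rw [← Equiv.sum_comp (Fin.consEquiv fun _ => n)
      (fun w => if Matrix.vecCons i w (Fin.last (k+1)) = j then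
        ∏ l : Fin (k+1), A (Matrix.vecCons i w l.castSucc) (Matrix.vecCons i w l.succ) else 0),
      Fintype.sum_prod_type]
    refine Finset.sum_congr rfl (fun x _ => Finset.sum_congr rfl (fun w _ => ?_))
    have hlast : Matrix.vecCons i (Matrix.vecCons x w) (Fin.last (k+1))
        = Matrix.vecCons x w (Fin.last k) := by
      rw [← Fin.succ_last, Matrix.cons_val_succ]
    have hprod : ∏ l : Fin (k+1), A (Matrix.vecCons i (Matrix.vecCons x w) l.castSucc)
        (Matrix.vecCons i (Matrix.vecCons x w) l.succ)
        = A i x * ∏ l : Fin k, A (Matrix.vecCons x w l.castSucc) (Matrix.vecCons x w l.succ) := by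
      rw [Fin.prod_univ_succ]
      simp [← Fin.succ_castSucc]
    have hce : ((Fin.consEquiv fun _ => n) (x, w)) = Fin.cons x w := rfl
    rw [hce]
    simp only [Matrix.vecCons] at hlast hprod ⊢
    simp only [hlast, hprod, mul_ite, mul_zero]
    by_cases hcj : (Fin.cons (α := fun _ => n) x w (Fin.last k)) = j <;> simp [hcj]

end SzegoAux

/-! ### Diagonal entries of Toeplitz matrix powers as a sum over increment vectors -/

open Classical in
lemma diag_entry_eq_tsum (R : ℕ → ℝ) (m k : ℕ) (T : Matrix (Fin m) (Fin m) ℝ)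
    (hT : ∀ i i' : Fin m, T i i' = R (max i.val i'.val - min i.val i'.val)) (i : Fin m) :
    (T ^ k) i i = ∑' v : Fin k → ℤ,
      if SzCond m i.val v then ∏ l, R (v l).natAbs else 0 := by
  have him : (i : ℤ) < m := by exact_mod_cast i.isLt
  have hi0 : (0:ℤ) ≤ (i:ℤ) := Int.ofNat_nonneg _
  set Box : Finset (Fin k → ℤ) := Fintype.piFinset (fun _ => Finset.Icc (-(m:ℤ)) m) with hBox
  have hsupp : ∀ v ∉ Box, (if SzCond m i.val v then ∏ l, R (v l).natAbs else 0) = 0 := by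
    intro v hv
    rw [if_neg]
    intro hc
    apply hv
    rw [hBox, Fintype.mem_piFinset]
    intro l
    have h1 := hc.2 l.val (le_of_lt l.isLt)
    have h2 := hc.2 (l.val + 1) l.isLt
    have hvl : v l = ((i:ℤ) + SzP v (l.val+1)) - ((i:ℤ) + SzP v l.val) := by
      rw [SzP_succ]
      have : SzExt v l.val = v l := by rw [SzExt, dif_pos l.isLt]
      omega
    rw [Finset.mem_Icc]
    omega
  rw [tsum_eq_sum hsupp, pow_apply_walk, ← Finset.sum_filter, ← Finset.sum_filter]
  have hq : ∀ w : Fin k → Fin m, ∀ t : ℕ, (ht : t ≤ k) →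
      ((Matrix.vecCons i w ⟨t, Nat.lt_succ_of_le ht⟩ : Fin m).val : ℤ)
        = (i:ℤ) + SzP (fun l : Fin k =>
            ((Matrix.vecCons i w l.succ : Fin m).val : ℤ)
              - ((Matrix.vecCons i w l.castSucc : Fin m).val : ℤ)) t := by
    intro w t
    induction t with
    | zero =>
      intro _
      have : (⟨0, Nat.lt_succ_of_le (Nat.zero_le k)⟩ : Fin (k+1)) = 0 := rfl
      simp [this, SzP]
    | succ t iht =>
      intro ht
      have ht' : t ≤ k := Nat.le_of_succ_le ht
      rw [SzP_succ]
      have hext : SzExt (fun l : Fin k =>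
          ((Matrix.vecCons i w l.succ : Fin m).val : ℤ)
            - ((Matrix.vecCons i w l.castSucc : Fin m).val : ℤ)) t
          = ((Matrix.vecCons i w ⟨t+1, Nat.lt_succ_of_le ht⟩ : Fin m).val : ℤ)
            - ((Matrix.vecCons i w ⟨t, Nat.lt_succ_of_le ht'⟩ : Fin m).val : ℤ) := by
        have htk : t < k := ht
        rw [SzExt, dif_pos htk]
        congr 1
      have hB := iht ht'
      rw [hext]
      omega
  refine Finset.sum_bij'
    (fun w _ => fun l : Fin k =>
      ((Matrix.vecCons i w l.succ : Fin m).val : ℤ)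
        - ((Matrix.vecCons i w l.castSucc : Fin m).val : ℤ))
    (fun v hv => fun l : Fin k =>
      (⟨((i:ℤ) + SzP v (l.val+1)).toNat, by
        rw [Finset.mem_filter] at hv
        have := hv.2.2 (l.val+1) l.isLt
        omega⟩ : Fin m))
    ?_ ?_ ?_ ?_ ?_
  · intro w hw
    beta_reduce
    rw [Finset.mem_filter] at hw ⊢
    have hwl : (Matrix.vecCons i w (Fin.last k) : Fin m) = i := hw.2
    constructor
    · rw [hBox, Fintype.mem_piFinset]
      intro l
      rw [Finset.mem_Icc]
      have b1 := (Matrix.vecCons i w l.succ : Fin m).isLt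
      have b2 := (Matrix.vecCons i w l.castSucc : Fin m).isLt
      omega
    · constructor
      · have := hq w k le_rfl
        have hlk : (⟨k, Nat.lt_succ_of_le le_rfl⟩ : Fin (k+1)) = Fin.last k := rfl
        rw [hlk, hwl] at this
        omega
      · intro t htk
        have := hq w t htk
        have b1 := (Matrix.vecCons i w ⟨t, Nat.lt_succ_of_le htk⟩ : Fin m).isLt
        have b2 : 0 ≤ ((Matrix.vecCons i w ⟨t, Nat.lt_succ_of_le htk⟩ : Fin m).val : ℤ) :=
          Int.ofNat_nonneg _
        omega
  · intro v hv
    rw [Finset.mem_filter] at hv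
    beta_reduce
    rw [Finset.mem_filter]
    refine ⟨Finset.mem_univ _, ?_⟩
    cases k with
    | zero => rfl
    | succ k' =>
      have : Fin.last (k'+1) = (Fin.last k').succ := rfl
      rw [this, Matrix.cons_val_succ]
      apply Fin.ext
      have hlast : (Fin.last k').val = k' := rfl
      simp only [hlast]
      have h0 := hv.2.1
      have : ((i:ℤ) + SzP v (k'+1)).toNat = i.val := by omega
      exact this
  · intro w hw
    beta_reduce
    funext l
    apply Fin.ext
    have hl1 : l.val + 1 ≤ k := l.isLt
    have := hq w (l.val+1) hl1
    have hidx : (⟨l.val+1, Nat.lt_succ_of_le hl1⟩ : Fin (k+1)) = l.succ := rfl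
    rw [hidx] at this
    rw [Matrix.cons_val_succ] at this
    show ((i:ℤ) + SzP (fun l : Fin k =>
        ((Matrix.vecCons i w l.succ : Fin m).val : ℤ)
          - ((Matrix.vecCons i w l.castSucc : Fin m).val : ℤ)) (l.val + 1)).toNat = (w l).val
    omega
  · intro v hv
    rw [Finset.mem_filter] at hv
    beta_reduce
    funext l
    have hp : ∀ t : Fin (k+1),
        (((Matrix.vecCons i (fun l : Fin k => (⟨((i:ℤ) + SzP v (l.val+1)).toNat, by
          have := hv.2.2 (l.val+1) l.isLt; omega⟩ : Fin m)) t : Fin m)).val : ℤ)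
          = (i:ℤ) + SzP v t.val := by
      intro t
      induction t using Fin.cases with
      | zero => simp [SzP]
      | succ s =>
        rw [Matrix.cons_val_succ]
        simp only
        have := hv.2.2 (s.val+1) s.isLt
        have hsv : (s.succ).val = s.val + 1 := rfl
        rw [hsv]
        omega
    rw [hp l.succ, hp l.castSucc]
    have h1 : (l.succ).val = l.val + 1 := rfl
    have h2 : (l.castSucc).val = l.val := rfl
    rw [h1, h2, SzP_succ]
    have : SzExt v l.val = v l := by rw [SzExt, dif_pos l.isLt]
    omega
  · intro w hw
    beta_reduce
    refine Finset.prod_congr rfl (fun l _ => ?_)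
    rw [hT]
    congr 1
    rw [natAbs_sub_eq]
/-! ### The integral of `f^k` -/

lemma szego_integral_side (R : ℕ → ℝ) (C : ℝ) (hC : 0 < C) (α : ℝ) (hα0 : 0 ≤ α) (hα1 : α < 1)
    (hR : ∀ j : ℕ, |R j| ≤ C * α ^ j) (f : ℝ → ℝ)
    (hf : ∀ x : ℝ, (f x : ℂ) =
      ∑' j : ℤ, Complex.exp (2 * Real.pi * Complex.I * (j : ℂ) * (x : ℂ)) * (R j.natAbs : ℂ))
    (k : ℕ) :
    ((∫ x in (0:ℝ)..1, f x ^ k : ℝ) : ℂ)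
      = ∑' v : Fin k → ℤ,
          ((if SzP v k = 0 then ∏ l, R (v l).natAbs else 0 : ℝ) : ℂ) := by
  have hgeo : Summable (fun n : ℕ => C * α ^ n) :=
    (summable_geometric_of_lt_one hα0 hα1).mul_left C
  have hh : Summable (fun j : ℤ => C * α ^ j.natAbs) :=
    Summable.of_nat_of_neg (by simpa using hgeo) (by simpa using hgeo)
  have hcn : Summable (fun j : ℤ => ‖(R j.natAbs : ℂ)‖) :=
    Summable.of_nonneg_of_le (fun j => norm_nonneg _)
      (fun j => by rw [Complex.norm_real, Real.norm_eq_abs]; exact hR _) hh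
  have hexp : ∀ (n : ℤ) (x : ℝ), ‖Complex.exp (2 * Real.pi * Complex.I * (n:ℂ) * (x:ℂ))‖ = 1 := by
    intro n x
    have : (2 * (Real.pi:ℂ) * Complex.I * (n:ℂ) * (x:ℂ))
        = ((2 * Real.pi * n * x : ℝ) : ℂ) * Complex.I := by push_cast; ring
    rw [this, Complex.norm_exp_ofReal_mul_I]
  set F : (Fin k → ℤ) → ℝ → ℂ := fun v x =>
    Complex.exp (2 * Real.pi * Complex.I * ((SzP v k : ℤ):ℂ) * (x:ℂ))
      * ∏ l, (R ((v l).natAbs) : ℂ) with hF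
  have hax : ∀ x : ℝ, Summable (fun j : ℤ =>
      ‖Complex.exp (2 * Real.pi * Complex.I * (j:ℂ) * (x:ℂ)) * (R j.natAbs : ℂ)‖) := by
    intro x
    simp only [norm_mul, hexp, one_mul]
    exact hcn
  have key : ∀ x : ℝ, ((f x : ℂ)) ^ k = ∑' v : Fin k → ℤ, F v x := by
    intro x
    rw [hf x, tsum_pow_fin (hax x) k]
    refine tsum_congr (fun v => ?_)
    rw [hF]
    beta_reduce
    rw [Finset.prod_mul_distrib, ← Complex.exp_sum]
    congr 2
    rw [← Finset.sum_mul, ← Finset.mul_sum, SzP_k_eq]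
    push_cast
    ring
  have hFc : ∀ v : Fin k → ℤ, Continuous (F v) := by
    intro v
    apply Continuous.mul _ continuous_const
    exact Complex.continuous_exp.comp (continuous_const.mul Complex.continuous_ofReal)
  have hInt : ∀ v : Fin k → ℤ, MeasureTheory.IntegrableOn (F v) (Set.Ioc (0:ℝ) 1) :=
    fun v => (hFc v).integrableOn_Ioc
  have hFnorm : ∀ v (x : ℝ), ‖F v x‖ = ∏ l, |R ((v l).natAbs)| := by
    intro v x
    rw [hF]
    beta_reduce
    rw [norm_mul, hexp, one_mul, norm_prod]
    exact Finset.prod_congr rfl (fun l _ => by rw [Complex.norm_real, Real.norm_eq_abs])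
  have hIN : ∀ v : Fin k → ℤ, (∫ x in Set.Ioc (0:ℝ) 1, ‖F v x‖) = ∏ l, |R ((v l).natAbs)| := by
    intro v
    rw [show (fun x => ‖F v x‖) = fun _ : ℝ => ∏ l, |R ((v l).natAbs)| from funext (hFnorm v)]
    simp [Real.volume_Ioc]
  have hsumI : Summable (fun v : Fin k → ℤ => ∫ x in Set.Ioc (0:ℝ) 1, ‖F v x‖) := by
    refine Summable.of_nonneg_of_le
      (fun v => MeasureTheory.integral_nonneg (fun x => norm_nonneg _)) (fun v => ?_)
      (summable_pi_prod hh (fun j => by positivity) k)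
    rw [hIN v]
    exact Finset.prod_le_prod (fun l _ => abs_nonneg _) (fun l _ => hR _)
  calc ((∫ x in (0:ℝ)..1, f x ^ k : ℝ) : ℂ)
      = ∫ x in (0:ℝ)..1, ((f x : ℂ)) ^ k := by
        rw [← intervalIntegral.integral_ofReal]
        push_cast
        rfl
    _ = ∫ x in (0:ℝ)..1, ∑' v : Fin k → ℤ, F v x := by
        refine intervalIntegral.integral_congr (fun x _ => key x)
    _ = ∫ x in Set.Ioc (0:ℝ) 1, ∑' v : Fin k → ℤ, F v x :=
        intervalIntegral.integral_of_le zero_le_one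
    _ = ∑' v : Fin k → ℤ, ∫ x in Set.Ioc (0:ℝ) 1, F v x :=
        (MeasureTheory.integral_tsum_of_summable_integral_norm hInt hsumI).symm
    _ = ∑' v : Fin k → ℤ,
          ((if SzP v k = 0 then ∏ l, R (v l).natAbs else 0 : ℝ) : ℂ) := by
        refine tsum_congr (fun v => ?_)
        rw [hF]
        beta_reduce
        rw [MeasureTheory.integral_mul_const, ← intervalIntegral.integral_of_le zero_le_one,
          integral_char]
        split
        · rw [one_mul, Complex.ofReal_prod]
        · rw [zero_mul, Complex.ofReal_zero]






/-- **Szegő-type limit theorem for exponentially decaying covariances.** Let `R : ℕ₀ → ℝ`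
satisfy `|R(j)| ≤ C·α^j` with `C > 0`, `α ∈ [0,1)`, extended to `ℤ` by `R(-j) = R(j)`; let
`T_m = (R(|i-i'|))_{1≤i,i'≤m}` be the associated symmetric Toeplitz matrices and let
`f : [0,1] → ℝ` be the real-valued spectral density `f(x) = Σ_{j∈ℤ} e^{2πijx} R(j)`.
Then for every `k ≥ 1`, `lim_{m→∞} (1/m)·tr(T_m^k) = ∫_0^1 f(x)^k dx`. -/
theorem szegoe_limit_trace_power (R : ℕ → ℝ) (C : ℝ) (hC : 0 < C)
    (α : ℝ) (hα0 : 0 ≤ α) (hα1 : α < 1)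
    (hR : ∀ j : ℕ, |R j| ≤ C * α ^ j)
    (T : (m : ℕ) → Matrix (Fin m) (Fin m) ℝ)
    (hT : ∀ (m : ℕ) (i i' : Fin m), T m i i' = R (max i.val i'.val - min i.val i'.val))
    (f : ℝ → ℝ)
    (hf : ∀ x : ℝ, (f x : ℂ) =
      ∑' j : ℤ, Complex.exp (2 * Real.pi * Complex.I * (j : ℂ) * (x : ℂ)) * (R j.natAbs : ℂ))
    (k : ℕ) (hk : 1 ≤ k) :
    Tendsto (fun m : ℕ => (m : ℝ)⁻¹ * ((T m ^ k).trace)) atTop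
      (nhds (∫ x in (0 : ℝ)..1, f x ^ k)) := by
  classical
  -- summability infrastructure
  have hgeo : Summable (fun n : ℕ => C * α ^ n) :=
    (summable_geometric_of_lt_one hα0 hα1).mul_left C
  have hh : Summable (fun j : ℤ => C * α ^ j.natAbs) :=
    Summable.of_nat_of_neg (by simpa using hgeo) (by simpa using hgeo)
  have h0 : ∀ j : ℤ, (0:ℝ) ≤ C * α ^ j.natAbs := fun j => by positivity
  have hH : Summable (fun v : Fin k → ℤ => ∏ l, C * α ^ ((v l).natAbs)) :=
    summable_pi_prod hh h0 k
  have hH0 : ∀ v : Fin k → ℤ, (0:ℝ) ≤ ∏ l, C * α ^ ((v l).natAbs) :=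
    fun v => Finset.prod_nonneg fun l _ => h0 _
  have hRprod : ∀ v : Fin k → ℤ, |∏ l, R ((v l).natAbs)| ≤ ∏ l, C * α ^ ((v l).natAbs) := by
    intro v
    rw [Finset.abs_prod]
    exact Finset.prod_le_prod (fun l _ => abs_nonneg _) (fun l _ => hR _)
  set base : (Fin k → ℤ) → ℝ :=
    fun v => if SzP v k = 0 then ∏ l, R ((v l).natAbs) else 0 with hbase_def
  have hbase_le : ∀ v, |base v| ≤ ∏ l, C * α ^ ((v l).natAbs) := by
    intro v
    rw [hbase_def]
    beta_reduce
    split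
    · exact hRprod v
    · simpa using hH0 v
  have hbase_sum : Summable base :=
    Summable.of_norm_bounded hH (fun v => by rw [Real.norm_eq_abs]; exact hbase_le v)
  set G : ℝ := ∑' v, base v with hG_def
  -- value of the integral
  have hiv : (∫ x in (0:ℝ)..1, f x ^ k) = G := by
    have h1 := szego_integral_side R C hC α hα0 hα1 hR f hf k
    have h2 : ((G:ℝ):ℂ) = ∑' v : Fin k → ℤ, ((base v : ℝ) : ℂ) := Complex.ofReal_tsum base
    rw [hbase_def] at h2
    exact Complex.ofReal_inj.mp (h1.trans h2.symm)
  rw [hiv]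
  -- the tail bound function D
  set Bn : (Fin k → ℤ) → ℕ := fun v => ∑ l, (v l).natAbs with hBn_def
  set D : ℕ → ℝ :=
    fun t => ∑' v : Fin k → ℤ, if t ≤ Bn v then ∏ l, C * α ^ ((v l).natAbs) else 0 with hD_def
  have hDsummand : ∀ t : ℕ,
      Summable (fun v : Fin k → ℤ => if t ≤ Bn v then ∏ l, C * α ^ ((v l).natAbs) else 0) := by
    intro t
    refine Summable.of_nonneg_of_le (fun v => ?_) (fun v => ?_) hH
    · split
      · exact hH0 v
      · exact le_refl 0
    · split
      · exact le_refl _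
      · exact hH0 v
  have hD0 : Tendsto D atTop (nhds 0) := by
    have h1 : Tendsto (fun (t : ℕ) => ∑' v : Fin k → ℤ,
        (if t ≤ Bn v then ∏ l, C * α ^ ((v l).natAbs) else 0)) atTop
        (nhds (∑' (_ : Fin k → ℤ), (0:ℝ))) := by
      refine tendsto_tsum_of_dominated_convergence hH (fun v => ?_) ?_
      · refine Tendsto.congr' ?_ tendsto_const_nhds
        filter_upwards [Filter.eventually_atTop.2 ⟨Bn v + 1, fun t ht => ht⟩] with t ht
        rw [if_neg (by omega)]
      · filter_upwards with t v
        rw [Real.norm_eq_abs]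
        split
        · rw [_root_.abs_of_nonneg (hH0 v)]
        · rw [abs_zero]; exact hH0 v
    rw [tsum_zero] at h1
    exact h1
  -- bound on partial sums
  have hSzPle : ∀ (v : Fin k → ℤ) (t : ℕ), |SzP v t| ≤ (Bn v : ℤ) := by
    intro v t
    refine (SzP_abs_le v t).trans ?_
    rw [hBn_def]
    push_cast
    refine le_of_eq (Finset.sum_congr rfl (fun l _ => ?_))
    rw [Int.abs_eq_natAbs]
  -- per-entry estimate
  have hper : ∀ (m : ℕ) (i : Fin m),
      |(T m ^ k) i i - G| ≤ D (i.val + 1) + D (m - i.val) := by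
    intro m i
    have hdiag := diag_entry_eq_tsum R m k (T m) (hT m) i
    have hΨle : ∀ v : Fin k → ℤ,
        |if SzCond m i.val v then ∏ l, R ((v l).natAbs) else 0|
          ≤ ∏ l, C * α ^ ((v l).natAbs) := by
      intro v
      split
      · exact hRprod v
      · simpa using hH0 v
    have hΨsum : Summable (fun v : Fin k → ℤ =>
        if SzCond m i.val v then ∏ l, R ((v l).natAbs) else 0) :=
      Summable.of_norm_bounded hH (fun v => by rw [Real.norm_eq_abs]; exact hΨle v)
    have hkey : ∀ v : Fin k → ℤ,
        |(if SzCond m i.val v then ∏ l, R ((v l).natAbs) else 0) - base v|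
          ≤ (if i.val + 1 ≤ Bn v then ∏ l, C * α ^ ((v l).natAbs) else 0)
            + (if m - i.val ≤ Bn v then ∏ l, C * α ^ ((v l).natAbs) else 0) := by
      intro v
      have hrhs0 : (0:ℝ) ≤ (if i.val + 1 ≤ Bn v then ∏ l, C * α ^ ((v l).natAbs) else 0)
          + (if m - i.val ≤ Bn v then ∏ l, C * α ^ ((v l).natAbs) else 0) := by
        apply add_nonneg <;> (split; exacts [hH0 v, le_refl 0])
      by_cases h1 : SzCond m i.val v
      · rw [if_pos h1, hbase_def]
        beta_reduce
        rw [if_pos h1.1, sub_self, abs_zero]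
        exact hrhs0
      · rw [if_neg h1]
        by_cases h2 : SzP v k = 0
        · rw [hbase_def]
          beta_reduce
          rw [if_pos h2, zero_sub, abs_neg]
          -- find a violated time
          have hbad : ∃ t ≤ k, ¬(0 ≤ (i.val:ℤ) + SzP v t ∧ (i.val:ℤ) + SzP v t < m) := by
            by_contra hcon
            push_neg at hcon
            exact h1 ⟨h2, fun t ht => hcon t ht⟩
          obtain ⟨t, htk, hviol⟩ := hbad
          have habs := hSzPle v t
          rw [abs_le] at habs
          by_cases hlow : (i.val:ℤ) + SzP v t < 0
          · have hle : i.val + 1 ≤ Bn v := by omega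
            rw [if_pos hle]
            calc |∏ l, R ((v l).natAbs)| ≤ ∏ l, C * α ^ ((v l).natAbs) := hRprod v
              _ ≤ _ := le_add_of_nonneg_right (by split; exacts [hH0 v, le_refl 0])
          · have hhigh : (m:ℤ) ≤ (i.val:ℤ) + SzP v t := by
              by_contra hcon
              push_neg at hcon
              exact hviol ⟨by omega, hcon⟩
            have hle : m - i.val ≤ Bn v := by omega
            rw [if_pos hle]
            calc |∏ l, R ((v l).natAbs)| ≤ ∏ l, C * α ^ ((v l).natAbs) := hRprod v
              _ ≤ _ := le_add_of_nonneg_left (by split; exacts [hH0 v, le_refl 0])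
        · rw [hbase_def]
          beta_reduce
          rw [if_neg h2, sub_zero, abs_zero]
          exact hrhs0
    calc |(T m ^ k) i i - G|
        = |∑' v : Fin k → ℤ,
            ((if SzCond m i.val v then ∏ l, R ((v l).natAbs) else 0) - base v)| := by
          rw [hdiag, hG_def, Summable.tsum_sub hΨsum hbase_sum]
      _ ≤ ∑' v : Fin k → ℤ,
            |(if SzCond m i.val v then ∏ l, R ((v l).natAbs) else 0) - base v| := by
          have := norm_tsum_le_tsum_norm (f := fun v : Fin k → ℤ =>
            ((if SzCond m i.val v then ∏ l, R ((v l).natAbs) else 0) - base v))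
            ((hΨsum.sub hbase_sum).abs.congr (fun v => (Real.norm_eq_abs _).symm))
          simpa [Real.norm_eq_abs] using this
      _ ≤ ∑' v : Fin k → ℤ,
            ((if i.val + 1 ≤ Bn v then ∏ l, C * α ^ ((v l).natAbs) else 0)
              + (if m - i.val ≤ Bn v then ∏ l, C * α ^ ((v l).natAbs) else 0)) :=
          Summable.tsum_le_tsum hkey ((hΨsum.sub hbase_sum).abs)
            (((hDsummand (i.val+1)).add (hDsummand (m - i.val))))
      _ = D (i.val + 1) + D (m - i.val) := by
          rw [Summable.tsum_add (hDsummand (i.val+1)) (hDsummand (m - i.val)), hD_def]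
  -- assemble: Cesàro convergence
  rw [← tendsto_sub_nhds_zero_iff]
  have hces : Tendsto (fun m : ℕ => 2 * ((m:ℝ)⁻¹ * ∑ t ∈ Finset.range m, D (t+1)))
      atTop (nhds 0) := by
    have h1 : Tendsto (fun t : ℕ => D (t+1)) atTop (nhds 0) :=
      hD0.comp (tendsto_add_atTop_nat 1)
    have h2 := h1.cesaro
    simpa using h2.const_mul 2
  refine squeeze_zero_norm' ?_ hces
  filter_upwards [Filter.eventually_atTop.2 ⟨1, fun m hm => hm⟩] with m hm
  have hm0 : (0:ℝ) < m := by exact_mod_cast hm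
  have htr : (T m ^ k).trace = ∑ i : Fin m, (T m ^ k) i i := rfl
  have hsplit : (m : ℝ)⁻¹ * ((T m ^ k).trace) - G
      = (m:ℝ)⁻¹ * ∑ i : Fin m, ((T m ^ k) i i - G) := by
    rw [Finset.sum_sub_distrib, htr]
    rw [Finset.sum_const, Finset.card_univ, Fintype.card_fin]
    rw [mul_sub]
    congr 1
    rw [nsmul_eq_mul, ← mul_assoc, inv_mul_cancel₀ hm0.ne', one_mul]
  rw [Real.norm_eq_abs, hsplit, abs_mul, _root_.abs_of_nonneg (by positivity : (0:ℝ) ≤ (m:ℝ)⁻¹)]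
  have hbound : |∑ i : Fin m, ((T m ^ k) i i - G)|
      ≤ 2 * ∑ t ∈ Finset.range m, D (t+1) := by
    calc |∑ i : Fin m, ((T m ^ k) i i - G)|
        ≤ ∑ i : Fin m, |(T m ^ k) i i - G| := Finset.abs_sum_le_sum_abs _ _
      _ ≤ ∑ i : Fin m, (D (i.val + 1) + D (m - i.val)) :=
          Finset.sum_le_sum (fun i _ => hper m i)
      _ = (∑ i : Fin m, D (i.val + 1)) + ∑ i : Fin m, D (m - i.val) := Finset.sum_add_distrib
      _ = (∑ t ∈ Finset.range m, D (t+1)) + ∑ t ∈ Finset.range m, D (m - t) := by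
          rw [Fin.sum_univ_eq_sum_range (fun t => D (t+1)), Fin.sum_univ_eq_sum_range (fun t => D (m - t))]
      _ = 2 * ∑ t ∈ Finset.range m, D (t+1) := by
          have : ∑ t ∈ Finset.range m, D (m - t) = ∑ t ∈ Finset.range m, D (t+1) := by
            rw [← Finset.sum_range_reflect (fun t => D (t+1)) m]
            refine Finset.sum_congr rfl (fun j hj => ?_)
            rw [Finset.mem_range] at hj
            congr 1
            omega
          rw [this]
          ring
    
  calc (m:ℝ)⁻¹ * |∑ i : Fin m, ((T m ^ k) i i - G)|
      ≤ (m:ℝ)⁻¹ * (2 * ∑ t ∈ Finset.range m, D (t+1)) := by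
        exact mul_le_mul_of_nonneg_left hbound (by positivity)
    _ = 2 * ((m:ℝ)⁻¹ * ∑ t ∈ Finset.range m, D (t+1)) := by ring
end
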